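/- arXiv:1608.03979 — 8 statements merged into one kernel-verified Lean document; each statement's English description precedes it below -/
import Mathlib

section
/- The pointwise logarithm log_G : G⁺ → G, a ↦ log∘a, is well defined (log∘a is bounded and continuous for a ∈ G⁺), is a two-sided inverse to exp_G : G → G⁺, is of class C^∞ on the open set G⁺, and its Fréchet derivative at a ∈ G⁺ is the continuous linear map u ↦ u/a (pointwise quotient). In particular exp_G : G → G⁺ is a C^∞ diffeomorphism onto G⁺. -/
open MeasureTheory BoundedContinuousFunction

noncomputable section

namespace Paper

variable {Y : Type*} [TopologicalSpace Y]

/-- Pointwise exponential map on `G = C_b(B;ℝ)`: `expG a x = exp (a x)`. -/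
def expG (a : BoundedContinuousFunction Y ℝ) : BoundedContinuousFunction Y ℝ :=
  BoundedContinuousFunction.ofNormedAddCommGroup (fun x => Real.exp (a x))
    (Real.continuous_exp.comp a.continuous) (Real.exp ‖a‖)
    (fun x => by
      rw [Real.norm_eq_abs, abs_of_pos (Real.exp_pos _)]
      exact Real.exp_le_exp.2 ((le_abs_self _).trans (a.norm_coe_le_norm x)))

@[simp] lemma expG_apply (a : BoundedContinuousFunction Y ℝ) (x : Y) :
    expG a x = Real.exp (a x) := rfl

/-- The set `G⁺` of functions with strictly positive infimum. -/
def Gplus : Set (BoundedContinuousFunction Y ℝ) :=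
  {a | ∃ ε > 0, ∀ x, ε ≤ a x}

/-- Amari's α-embedding chart `φ_α`. -/
def phi (α : ℝ) (a : BoundedContinuousFunction Y ℝ) : BoundedContinuousFunction Y ℝ :=
  if α = 1 then a else (2 / (1 - α)) • (expG (((1 - α) / 2) • a) - 1)

end Paper

section Aux

open NormedSpace

namespace Paper

variable {Y : Type*} [TopologicalSpace Y]

/-- Evaluation at a point as a ring homomorphism. -/
private def evalRH (x : Y) : BoundedContinuousFunction Y ℝ →+* ℝ where
  toFun f := f x
  map_one' := rfl
  map_mul' _ _ := rfl
  map_zero' := rfl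
  map_add' _ _ := rfl

lemma expG_eq (a : BoundedContinuousFunction Y ℝ) : expG a = NormedSpace.exp a := by
  ext x
  have h : (evalRH x) (NormedSpace.exp a) = NormedSpace.exp ((evalRH x) a) :=
    map_exp (evalRH x) (continuous_eval_const x) a
  rw [expG_apply, Real.exp_eq_exp_ℝ]
  exact h.symm

lemma memGplus_pos {a : BoundedContinuousFunction Y ℝ} (h : a ∈ Gplus) (x : Y) : 0 < a x := by
  obtain ⟨ε, hε, hle⟩ := h
  exact hε.trans_le (hle x)

open Classical in
/-- Pointwise logarithm on `G⁺`, extended by `0` elsewhere. -/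
noncomputable def logG (a : BoundedContinuousFunction Y ℝ) : BoundedContinuousFunction Y ℝ :=
  if h : a ∈ Gplus then
    BoundedContinuousFunction.ofNormedAddCommGroup (fun x => Real.log (a x))
      (continuous_iff_continuousAt.2 fun x =>
        (Real.continuousAt_log (ne_of_gt (memGplus_pos h x))).comp
          (map_continuous a).continuousAt)
      (|Real.log h.choose| + |Real.log ‖a‖|)
      (fun x => by
        have hε : 0 < h.choose := h.choose_spec.1
        have h1 : h.choose ≤ a x := h.choose_spec.2 x
        have h2 : a x ≤ ‖a‖ := (le_abs_self _).trans (a.norm_coe_le_norm x)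
        have l1 : Real.log h.choose ≤ Real.log (a x) := Real.log_le_log hε h1
        have l2 : Real.log (a x) ≤ Real.log ‖a‖ := Real.log_le_log (hε.trans_le h1) h2
        rw [Real.norm_eq_abs, abs_le]
        constructor
        · nlinarith [neg_abs_le (Real.log h.choose), abs_nonneg (Real.log ‖a‖)]
        · nlinarith [le_abs_self (Real.log ‖a‖), abs_nonneg (Real.log h.choose)])
  else 0

lemma logG_apply {a : BoundedContinuousFunction Y ℝ} (h : a ∈ Gplus) (x : Y) :
    logG a x = Real.log (a x) := by
  rw [logG]
  rw [dif_pos h]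
  rfl

lemma expG_mem (a : BoundedContinuousFunction Y ℝ) : expG a ∈ Gplus := by
  refine ⟨Real.exp (-‖a‖), Real.exp_pos _, fun x => ?_⟩
  rw [expG_apply]
  exact Real.exp_le_exp.2 (by
    have := a.norm_coe_le_norm x
    rw [Real.norm_eq_abs] at this
    linarith [neg_abs_le (a x)])

lemma logG_expG (a : BoundedContinuousFunction Y ℝ) : logG (expG a) = a := by
  ext x
  rw [logG_apply (expG_mem a), expG_apply, Real.log_exp]

lemma expG_logG {a : BoundedContinuousFunction Y ℝ} (h : a ∈ Gplus) : expG (logG a) = a := by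
  ext x
  rw [expG_apply, logG_apply h, Real.exp_log (memGplus_pos h x)]

lemma contDiff_expG : ContDiff ℝ (⊤ : ℕ∞) (expG : BoundedContinuousFunction Y ℝ → _) := by
  have hfun : (expG : BoundedContinuousFunction Y ℝ → _) = NormedSpace.exp := funext expG_eq
  rw [hfun]
  exact contDiff_iff_contDiffAt.2 fun x =>
    (NormedSpace.analyticAt_exp_of_mem_ball (𝕂 := ℝ) x (by
      rw [NormedSpace.expSeries_radius_eq_top]; exact edist_lt_top _ _)).contDiffAt

lemma logG_smooth_at {a : BoundedContinuousFunction Y ℝ} (ha : a ∈ Gplus) :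
    ContDiffAt ℝ (⊤ : ℕ∞) (logG : BoundedContinuousFunction Y ℝ → _) a ∧
    ∃ D : BoundedContinuousFunction Y ℝ →L[ℝ] BoundedContinuousFunction Y ℝ,
      (∀ u : BoundedContinuousFunction Y ℝ, ∀ x, D u x = u x / a x) ∧
      HasFDerivAt (logG : BoundedContinuousFunction Y ℝ → _) D a := by
  classical
  have hab : expG (logG a) = a := expG_logG ha
  set b : BoundedContinuousFunction Y ℝ := logG a with hb
  have hmul : expG b * expG (-b) = 1 := by
    ext x
    simp [← Real.exp_add]
  have hmul' : expG (-b) * expG b = 1 := by rw [mul_comm]; exact hmul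
  let L : BoundedContinuousFunction Y ℝ ≃ₗ[ℝ] BoundedContinuousFunction Y ℝ :=
    { toFun := fun v => expG b * v
      map_add' := fun v w => mul_add _ v w
      map_smul' := fun c v => (mul_smul_comm c (expG b) v)
      invFun := fun v => expG (-b) * v
      left_inv := fun v => by
        show expG (-b) * (expG b * v) = v
        rw [← mul_assoc, hmul', one_mul]
      right_inv := fun v => by
        show expG b * (expG (-b) * v) = v
        rw [← mul_assoc, hmul, one_mul] }
  let E : BoundedContinuousFunction Y ℝ ≃L[ℝ] BoundedContinuousFunction Y ℝ :=
    { L with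
      continuous_toFun := continuous_const.mul continuous_id
      continuous_invFun := continuous_const.mul continuous_id }
  have hEapp : ∀ v, E v = expG b * v := fun v => rfl
  have hEsymm : ∀ v, E.symm v = expG (-b) * v := fun v => rfl
  have hexp : (expG : BoundedContinuousFunction Y ℝ → _) = NormedSpace.exp := funext expG_eq
  have hEc : (E : BoundedContinuousFunction Y ℝ →L[ℝ] BoundedContinuousFunction Y ℝ)
      = NormedSpace.exp b • (1 : BoundedContinuousFunction Y ℝ →L[ℝ] BoundedContinuousFunction Y ℝ) := by
    ext v
    rw [ContinuousLinearMap.smul_apply, ContinuousLinearMap.one_apply,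
      ContinuousLinearEquiv.coe_coe, hEapp, smul_eq_mul, ← expG_eq]
  have hc : ContDiffAt ℝ (⊤ : ℕ∞) (expG : BoundedContinuousFunction Y ℝ → _) b :=
    contDiff_expG.contDiffAt
  have hfd : HasFDerivAt (expG : BoundedContinuousFunction Y ℝ → _)
      (E : BoundedContinuousFunction Y ℝ →L[ℝ] BoundedContinuousFunction Y ℝ) b := by
    rw [hexp, hEc]
    exact hasFDerivAt_exp
  have hn : ((⊤ : ℕ∞) : WithTop ℕ∞) ≠ 0 := by simp
  set g := hc.localInverse hfd hn with hg
  have hstrict := hc.hasStrictFDerivAt' hfd hn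
  have hright : ∀ᶠ y in nhds (expG b), expG (g y) = y :=
    hstrict.eventually_right_inverse
  have heq : (logG : BoundedContinuousFunction Y ℝ → _) =ᶠ[nhds a] g := by
    rw [← hab]
    filter_upwards [hright] with y hy
    conv_lhs => rw [← hy, logG_expG]
  refine ⟨?_, (E.symm : BoundedContinuousFunction Y ℝ →L[ℝ] BoundedContinuousFunction Y ℝ),
      fun v x => ?_, ?_⟩
  · have h1 := hc.to_localInverse hfd hn
    rw [hab] at h1
    exact h1.congr_of_eventuallyEq heq
  · rw [ContinuousLinearEquiv.coe_coe, hEsymm]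
    have hax : a x = Real.exp (b x) := by rw [← hab, expG_apply]
    have hbx : (expG (-b) * v) x = Real.exp (-(b x)) * v x := by
      rw [BoundedContinuousFunction.mul_apply, expG_apply, BoundedContinuousFunction.neg_apply]
    rw [hbx, hax, Real.exp_neg, div_eq_mul_inv, mul_comm]
  · have hD := hstrict.to_localInverse
    rw [hab] at hD
    exact hD.hasFDerivAt.congr_of_eventuallyEq heq

end Paper

end Aux

/-- the pointwise logarithm `log_G : G⁺ → G` is well defined (it agrees
pointwise with `log ∘ a` on `G⁺`), is a two-sided inverse of `exp_G : G → G⁺`, is of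
class `C^∞` on the open set `G⁺`, and its Fréchet derivative at `a ∈ G⁺` is
`u ↦ u / a` (pointwise quotient).  In particular `exp_G : G → G⁺` is a `C^∞`
diffeomorphism onto `G⁺`. -/
theorem statement_2 {X : Type*} [NormedAddCommGroup X] [NormedSpace ℝ X]
    (B : Set X) (hB : IsOpen B) (hBne : B.Nonempty) :
    ∃ logG : BoundedContinuousFunction B ℝ → BoundedContinuousFunction B ℝ,
      (∀ a ∈ Paper.Gplus (Y := B), ∀ x, logG a x = Real.log (a x)) ∧
      (∀ a : BoundedContinuousFunction B ℝ, logG (Paper.expG a) = a) ∧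
      (∀ a ∈ Paper.Gplus (Y := B), Paper.expG (logG a) = a) ∧
      ContDiffOn ℝ (⊤ : ℕ∞) logG (Paper.Gplus (Y := B)) ∧
      (∀ a ∈ Paper.Gplus (Y := B),
        ∃ D : BoundedContinuousFunction B ℝ →L[ℝ] BoundedContinuousFunction B ℝ,
          (∀ u : BoundedContinuousFunction B ℝ, ∀ x, D u x = u x / a x) ∧
          HasFDerivAt logG D a) ∧
      Set.range (Paper.expG (Y := B)) = Paper.Gplus ∧
      ContDiff ℝ (⊤ : ℕ∞) (Paper.expG (Y := B)) := by
  
  haveI : Nonempty B := hBne.to_subtype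
  classical
  refine ⟨Paper.logG, fun a ha x => Paper.logG_apply ha x, Paper.logG_expG,
    fun a ha => Paper.expG_logG ha, fun a ha => ((Paper.logG_smooth_at ha).1).contDiffWithinAt,
    fun a ha => (Paper.logG_smooth_at ha).2, ?_, Paper.contDiff_expG⟩
  ext a
  constructor
  · rintro ⟨c, rfl⟩
    exact Paper.expG_mem c
  · intro ha
    exact ⟨Paper.logG a, Paper.expG_logG ha⟩
end
end

section
/- For each α ∈ ℝ with α ≠ ±1 and all a, b ∈ G: (i) D^α(a‖b) ≥ 0; (ii) D^{−α}(a‖b) = D^α(b‖a); and (iii) if μ has full support, i.e. μ(A) > 0 for every nonempty open A ⊆ B, then D^α(a‖b) = 0 if and only if a = b. -/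
open MeasureTheory BoundedContinuousFunction

noncomputable section

namespace Paper

variable {Y : Type*} [TopologicalSpace Y]

variable [MeasurableSpace Y]

/-- The α-divergence `D^α(a‖b)` (for `α ≠ ±1`) between the finite measures with
`μ`-densities `exp_G(a)` and `exp_G(b)`. -/
def Dalpha (μ : Measure Y) (α : ℝ) (a b : BoundedContinuousFunction Y ℝ) : ℝ :=
  (2 / (1 + α)) * ∫ x, (phi (-1) a x - phi α a x) ∂μ
    + (2 / (1 - α)) * ∫ x, (phi (-1) b x - phi (-α) b x) ∂μ
    - ∫ x, phi α a x * phi (-α) b x ∂μ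

/-- The extended Kullback–Leibler divergence `D^{−1}(a‖b)`. -/
def DKL (μ : Measure Y) (a b : BoundedContinuousFunction Y ℝ) : ℝ :=
  ∫ x, (expG b x - expG a x) ∂μ + ∫ x, expG a x * (a x - b x) ∂μ

end Paper

/-! ### Auxiliary scalar lemmas -/

/-- auxiliary scalar function: `gfun c d t = (e^{dt}-1)/d + (e^{-ct}-1)/c`. -/
def gfun (c d t : ℝ) : ℝ :=
  (Real.exp (d * t) - 1) / d + (Real.exp (-(c * t)) - 1) / c

lemma gfun_zero (c d : ℝ) : gfun c d 0 = 0 := by simp [gfun]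

lemma gfun_continuous (c d : ℝ) : Continuous (gfun c d) := by
  unfold gfun; fun_prop

lemma gfun_hasDerivAt (c d : ℝ) (hc : c ≠ 0) (hd : d ≠ 0) (t : ℝ) :
    HasDerivAt (gfun c d) (Real.exp (d * t) - Real.exp (-(c * t))) t := by
  have h1 : HasDerivAt (fun t : ℝ => d * t) d t := by
    simpa using (hasDerivAt_id t).const_mul d
  have h2 : HasDerivAt (fun t : ℝ => -(c * t)) (-c) t := by
    simpa [Pi.neg_def] using ((hasDerivAt_id t).const_mul c).neg
  have e1 := ((h1.exp.sub_const 1).div_const d).add ((h2.exp.sub_const 1).div_const c)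
  refine HasDerivAt.congr_deriv e1 ?_
  field_simp
  ring

lemma gfun_pos (c d : ℝ) (hc : c ≠ 0) (hd : d ≠ 0) (hsum : c + d = 1)
    {t : ℝ} (ht : t ≠ 0) : 0 < gfun c d t := by
  have hderiv : ∀ s : ℝ, deriv (gfun c d) s = Real.exp (d * s) - Real.exp (-(c * s)) :=
    fun s => (gfun_hasDerivAt c d hc hd s).deriv
  rcases ht.lt_or_gt with h | h
  · have hanti : StrictAntiOn (gfun c d) (Set.Iic 0) := by
      apply strictAntiOn_of_deriv_neg (convex_Iic 0) (gfun_continuous c d).continuousOn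
      intro s hs
      rw [interior_Iic] at hs
      rw [hderiv s, sub_neg]
      apply Real.exp_lt_exp.2
      nlinarith [hs.out]
    have := hanti (Set.mem_Iic.2 h.le) (Set.mem_Iic.2 le_rfl) h
    simpa [gfun_zero] using this
  · have hmono : StrictMonoOn (gfun c d) (Set.Ici 0) := by
      apply strictMonoOn_of_deriv_pos (convex_Ici 0) (gfun_continuous c d).continuousOn
      intro s hs
      rw [interior_Ici] at hs
      rw [hderiv s, sub_pos]
      apply Real.exp_lt_exp.2
      nlinarith [hs.out]
    have := hmono (Set.mem_Ici.2 le_rfl) (Set.mem_Ici.2 h.le) h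
    simpa [gfun_zero] using this

lemma gfun_nonneg (c d : ℝ) (hc : c ≠ 0) (hd : d ≠ 0) (hsum : c + d = 1)
    (t : ℝ) : 0 ≤ gfun c d t := by
  rcases eq_or_ne t 0 with rfl | ht
  · simp [gfun_zero]
  · exact (gfun_pos c d hc hd hsum ht).le

lemma pt_id (c d : ℝ) (hc : c ≠ 0) (hd : d ≠ 0) (hsum : c + d = 1) (u v : ℝ) :
    (1/d) * Real.exp u + (1/c) * Real.exp v - (1/(c*d)) * Real.exp (c*u + d*v)
      = Real.exp (c*u + d*v) * gfun c d (u - v) := by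
  have e1 : Real.exp (c*u + d*v) * Real.exp (d*(u-v)) = Real.exp u := by
    rw [← Real.exp_add]; congr 1; linear_combination u * hsum
  have e2 : Real.exp (c*u + d*v) * Real.exp (-(c*(u-v))) = Real.exp v := by
    rw [← Real.exp_add]; congr 1; linear_combination v * hsum
  have h3 : (1:ℝ)/d + 1/c = 1/(c*d) := by
    field_simp
    linear_combination hsum
  have h4 : Real.exp (c*u+d*v) * ((Real.exp (d*(u-v)) - 1)/d + (Real.exp (-(c*(u-v))) - 1)/c)
      = (Real.exp (c*u+d*v) * Real.exp (d*(u-v)))/d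
        + (Real.exp (c*u+d*v) * Real.exp (-(c*(u-v))))/c
        - Real.exp (c*u+d*v) * ((1:ℝ)/d + 1/c) := by ring
  rw [gfun, h4, e1, e2, h3]
  ring

lemma phi_apply' {Y : Type*} [TopologicalSpace Y] (r : ℝ) (hr : r ≠ 1)
    (f : BoundedContinuousFunction Y ℝ) (x : Y) :
    Paper.phi r f x = (2/(1-r)) * (Real.exp ((1-r)/2 * f x) - 1) := by
  simp [Paper.phi, hr, smul_eq_mul]

/-- for `α ≠ ±1` and all `a, b ∈ G`: (i) `D^α(a‖b) ≥ 0`;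
(ii) `D^{−α}(a‖b) = D^α(b‖a)`; (iii) if `μ` has full support (every nonempty open
`A ⊆ B` has `μ A > 0`) then `D^α(a‖b) = 0 ↔ a = b`. -/
theorem statement_6 {X : Type*} [NormedAddCommGroup X] [NormedSpace ℝ X]
    [MeasurableSpace X] [OpensMeasurableSpace X]
    (B : Set X) (hB : IsOpen B) (hBne : B.Nonempty)
    (μ : Measure B) [IsProbabilityMeasure μ]
    (α : ℝ) (hα1 : α ≠ 1) (hα2 : α ≠ -1) (a b : BoundedContinuousFunction B ℝ) :
    0 ≤ Paper.Dalpha μ α a b ∧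
    Paper.Dalpha μ (-α) a b = Paper.Dalpha μ α b a ∧
    ((∀ A : Set B, IsOpen A → A.Nonempty → 0 < μ A) →
      (Paper.Dalpha μ α a b = 0 ↔ a = b)) := by
  have hc : (1-α)/2 ≠ 0 := by
    intro h; apply hα1; linarith [(div_eq_zero_iff.1 h).resolve_right (by norm_num)]
  have hd : (1+α)/2 ≠ 0 := by
    intro h; apply hα2; have := (div_eq_zero_iff.1 h).resolve_right (by norm_num); linarith
  have hsum : (1-α)/2 + (1+α)/2 = 1 := by ring
  have h1a : (1+α) ≠ 0 := fun h => hα2 (by linarith)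
  have h1b : (1-α) ≠ 0 := fun h => hα1 (by linarith)
  have hm1 : (-1 : ℝ) ≠ 1 := by norm_num
  have hmα : (-α : ℝ) ≠ 1 := fun h => hα2 (by linarith)
  set F : B → ℝ :=
    fun x => Real.exp ((1-α)/2 * a x + (1+α)/2 * b x) * gfun ((1-α)/2) ((1+α)/2) (a x - b x)
    with hFdef
  -- the scalar identity
  have key : ∀ u v : ℝ,
      (2/(1+α)) * ((Real.exp u - 1) - (2/(1-α)) * (Real.exp ((1-α)/2 * u) - 1))
        + (2/(1-α)) * ((Real.exp v - 1) - (2/(1+α)) * (Real.exp ((1+α)/2 * v) - 1))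
        - ((2/(1-α)) * (Real.exp ((1-α)/2 * u) - 1))
            * ((2/(1+α)) * (Real.exp ((1+α)/2 * v) - 1))
      = Real.exp ((1-α)/2 * u + (1+α)/2 * v) * gfun ((1-α)/2) ((1+α)/2) (u - v) := by
    intro u v
    have hmul : Real.exp ((1-α)/2 * u) * Real.exp ((1+α)/2 * v)
        = Real.exp ((1-α)/2 * u + (1+α)/2 * v) := (Real.exp_add _ _).symm
    rw [← pt_id ((1-α)/2) ((1+α)/2) hc hd hsum u v, ← hmul]
    field_simp
    ring
  -- pointwise rewriting of the integrand
  have hpt : ∀ x : B,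
      (2/(1+α)) * (Paper.phi (-1) a x - Paper.phi α a x)
        + (2/(1-α)) * (Paper.phi (-1) b x - Paper.phi (-α) b x)
        - Paper.phi α a x * Paper.phi (-α) b x = F x := by
    intro x
    have hkey := key (a x) (b x)
    rw [phi_apply' (-1) hm1 a x, phi_apply' (-1) hm1 b x, phi_apply' α hα1 a x,
      phi_apply' (-α) hmα b x]
    simp only [hFdef]
    simp only [sub_neg_eq_add] at hkey ⊢
    norm_num
    linarith [hkey]
  -- integrability
  have hint : ∀ (r : ℝ) (g : BoundedContinuousFunction B ℝ),
      Integrable (fun x => Paper.phi r g x) μ := fun r g => (Paper.phi r g).integrable μ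
  have h1 : Integrable (fun x => Paper.phi (-1) a x - Paper.phi α a x) μ :=
    (hint _ _).sub (hint _ _)
  have h2 : Integrable (fun x => Paper.phi (-1) b x - Paper.phi (-α) b x) μ :=
    (hint _ _).sub (hint _ _)
  have h3 : Integrable (fun x => Paper.phi α a x * Paper.phi (-α) b x) μ := by
    have := (Paper.phi α a * Paper.phi (-α) b).integrable μ
    exact this
  have h12 : Integrable (fun x =>
      (2/(1+α)) * (Paper.phi (-1) a x - Paper.phi α a x)
        + (2/(1-α)) * (Paper.phi (-1) b x - Paper.phi (-α) b x)) μ :=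
    (h1.const_mul _).add (h2.const_mul _)
  have hD : Paper.Dalpha μ α a b = ∫ x, F x ∂μ := by
    rw [Paper.Dalpha, ← integral_const_mul, ← integral_const_mul,
      ← integral_add (h1.const_mul _) (h2.const_mul _),
      ← integral_sub h12 h3]
    exact integral_congr_ae (Filter.Eventually.of_forall hpt)
  have hFnonneg : ∀ x, 0 ≤ F x := fun x =>
    mul_nonneg (Real.exp_pos _).le (gfun_nonneg _ _ hc hd hsum _)
  refine ⟨?_, ?_, ?_⟩
  · rw [hD]; exact integral_nonneg hFnonneg
  · simp only [Paper.Dalpha, neg_neg]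
    have h4 : ∫ x, Paper.phi (-α) a x * Paper.phi α b x ∂μ
        = ∫ x, Paper.phi α b x * Paper.phi (-α) a x ∂μ :=
      integral_congr_ae (Filter.Eventually.of_forall fun x => mul_comm _ _)
    rw [h4]
    ring_nf
  · intro hsupp
    constructor
    · intro h0
      have hFint : Integrable F μ :=
        (h12.sub h3).congr (Filter.Eventually.of_forall hpt)
      have hae : F =ᵐ[μ] 0 :=
        (integral_eq_zero_iff_of_nonneg hFnonneg hFint).1 (by rw [← hD]; exact h0)
      ext x
      by_contra hne
      have hFcont : Continuous F := by
        rw [hFdef]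
        exact (Real.continuous_exp.comp
            ((continuous_const.mul a.continuous).add (continuous_const.mul b.continuous))).mul
          ((gfun_continuous _ _).comp (a.continuous.sub b.continuous))
      have hopen : IsOpen {y : B | 0 < F y} := isOpen_lt continuous_const hFcont
      have hnonempty : ({y : B | 0 < F y}).Nonempty :=
        ⟨x, mul_pos (Real.exp_pos _) (gfun_pos _ _ hc hd hsum (sub_ne_zero.2 hne))⟩
      have hpos := hsupp _ hopen hnonempty
      have hnull : μ {y : B | 0 < F y} = 0 := by
        have h5 : μ {y : B | ¬ F y = 0} = 0 := by
          have := hae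
          rw [Filter.EventuallyEq, ae_iff] at this
          simpa using this
        exact measure_mono_null (fun y hy => hy.out.ne') h5
      exact absurd hnull hpos.ne'
    · intro h
      subst h
      rw [hD]
      have : ∀ x : B, F x = 0 := fun x => by
        rw [hFdef]; simp [gfun_zero]
      simp [funext this]
end
end

section
/- Generalised cosine rule: for each α ∈ ℝ with α ≠ ±1 and all a, b, c ∈ G, D^α(a‖c) = D^α(a‖b) + D^α(b‖c) − ∫_B (φ_α(a) − φ_α(b))·(φ_{−α}(c) − φ_{−α}(b)) dμ. -/
open MeasureTheory BoundedContinuousFunction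

noncomputable section

lemma phi_apply_ne {Y : Type*} [TopologicalSpace Y] {α : ℝ} (hα : α ≠ 1)
    (a : BoundedContinuousFunction Y ℝ) (x : Y) :
    Paper.phi α a x = (2 / (1 - α)) * (Real.exp ((1 - α) / 2 * a x) - 1) := by
  simp [Paper.phi, hα]

/-- generalised cosine rule: for `α ≠ ±1` and all `a, b, c ∈ G`,
`D^α(a‖c) = D^α(a‖b) + D^α(b‖c) − ∫ (φ_α(a) − φ_α(b))·(φ_{−α}(c) − φ_{−α}(b)) dμ`. -/
theorem statement_8 {X : Type*} [NormedAddCommGroup X] [NormedSpace ℝ X]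
    [MeasurableSpace X] [OpensMeasurableSpace X]
    (B : Set X) (hB : IsOpen B) (hBne : B.Nonempty)
    (μ : Measure B) [IsProbabilityMeasure μ]
    (α : ℝ) (hα1 : α ≠ 1) (hα2 : α ≠ -1) (a b c : BoundedContinuousFunction B ℝ) :
    Paper.Dalpha μ α a c
      = Paper.Dalpha μ α a b + Paper.Dalpha μ α b c
        - ∫ x, (Paper.phi α a x - Paper.phi α b x)
            * (Paper.phi (-α) c x - Paper.phi (-α) b x) ∂μ := by
  have h1 : (1 : ℝ) + α ≠ 0 := fun h => hα2 (by linarith)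
  have h2 : (1 : ℝ) - α ≠ 0 := fun h => hα1 (by linarith)
  have hmα : -α ≠ (1 : ℝ) := fun h => hα2 (by linarith)
  have hm1 : (-1 : ℝ) ≠ 1 := by norm_num
  have hInt : ∀ f : BoundedContinuousFunction B ℝ, Integrable (fun x => f x) μ :=
    fun f => f.integrable μ
  -- integrability of products
  have hIntMul : ∀ f g : BoundedContinuousFunction B ℝ,
      Integrable (fun x => f x * g x) μ := by
    intro f g
    simpa using hInt (f * g)
  -- expansion of the product integral
  have hexp : ∫ x, (Paper.phi α a x - Paper.phi α b x)
        * (Paper.phi (-α) c x - Paper.phi (-α) b x) ∂μ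
      = ∫ x, Paper.phi α a x * Paper.phi (-α) c x ∂μ
        - ∫ x, Paper.phi α a x * Paper.phi (-α) b x ∂μ
        - ∫ x, Paper.phi α b x * Paper.phi (-α) c x ∂μ
        + ∫ x, Paper.phi α b x * Paper.phi (-α) b x ∂μ := by
    have i1 : Integrable (fun x => Paper.phi α a x * Paper.phi (-α) c x
        - Paper.phi α a x * Paper.phi (-α) b x) μ := (hIntMul _ _).sub (hIntMul _ _)
    have i2 : Integrable (fun x => (Paper.phi α a x * Paper.phi (-α) c x
        - Paper.phi α a x * Paper.phi (-α) b x)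
        - Paper.phi α b x * Paper.phi (-α) c x) μ := i1.sub (hIntMul _ _)
    have e1 : ∫ x, (Paper.phi α a x - Paper.phi α b x)
          * (Paper.phi (-α) c x - Paper.phi (-α) b x) ∂μ
        = ∫ x, ((Paper.phi α a x * Paper.phi (-α) c x
            - Paper.phi α a x * Paper.phi (-α) b x)
            - Paper.phi α b x * Paper.phi (-α) c x)
            + Paper.phi α b x * Paper.phi (-α) b x ∂μ := by
      apply integral_congr_ae
      filter_upwards with x
      ring
    rw [e1, integral_add i2 (hIntMul _ _), integral_sub i1 (hIntMul _ _),
      integral_sub (hIntMul _ _) (hIntMul _ _)]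
  -- the key self-divergence identity
  have key : (2 / (1 + α)) * ∫ x, (Paper.phi (-1) b x - Paper.phi α b x) ∂μ
        + (2 / (1 - α)) * ∫ x, (Paper.phi (-1) b x - Paper.phi (-α) b x) ∂μ
      = ∫ x, Paper.phi α b x * Paper.phi (-α) b x ∂μ := by
    have j1 : Integrable (fun x => 2 / (1 + α)
        * (Paper.phi (-1) b x - Paper.phi α b x)) μ := ((hInt _).sub (hInt _)).const_mul _
    have j2 : Integrable (fun x => 2 / (1 - α)
        * (Paper.phi (-1) b x - Paper.phi (-α) b x)) μ := ((hInt _).sub (hInt _)).const_mul _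
    rw [← integral_const_mul, ← integral_const_mul, ← integral_add j1 j2]
    apply integral_congr_ae
    filter_upwards with x
    rw [phi_apply_ne hα1, phi_apply_ne hmα, phi_apply_ne hm1]
    have he : Real.exp (b x)
        = Real.exp ((1 - α) / 2 * b x) * Real.exp ((1 - -α) / 2 * b x) := by
      rw [← Real.exp_add]; ring_nf
    have h2' : (1 : ℝ) - -α ≠ 0 := by intro h; apply h1; linarith
    rw [show (1 - (-1 : ℝ)) / 2 * b x = b x by ring, he]
    field_simp
    ring
  simp only [Paper.Dalpha]
  rw [hexp]
  -- expand the remaining integrals of differences is unnecessary; linear arithmetic suffices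
  linarith [key]

end
end

section
/- Fix α ∈ ℝ with α ≠ ±1 and b ∈ G. The function f : φ_α(G) → ℝ defined by f(c) := D^α(φ_α⁻¹(c)‖b) is Fréchet differentiable on the open set φ_α(G), and for every a ∈ G its Fréchet derivative at the point c = φ_α(a) is the continuous linear functional u ↦ ∫_B (φ_{−α}(a) − φ_{−α}(b))·u dμ. -/
open MeasureTheory BoundedContinuousFunction

noncomputable section

section Aux

open NormedSpace

variable {Y : Type*} [TopologicalSpace Y]

/-- Evaluation at a point as a ring homomorphism on `C_b(Y;ℝ)`. -/
def evalRingHomB (x : Y) : BoundedContinuousFunction Y ℝ →+* ℝ where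
  toFun f := f x
  map_one' := rfl
  map_mul' _ _ := rfl
  map_zero' := rfl
  map_add' _ _ := rfl

lemma expG_eq_exp (a : BoundedContinuousFunction Y ℝ) : Paper.expG a = exp a := by
  ext x
  have h := map_exp (evalRingHomB (Y := Y) x)
    (continuous_eval_const x) a
  simp only [Paper.expG_apply]
  rw [Real.exp_eq_exp_ℝ]
  exact h.symm

lemma phi_eq' {β : ℝ} (hβ : β ≠ 1) (a : BoundedContinuousFunction Y ℝ) :
    Paper.phi β a = (2 / (1 - β)) • (exp (((1 - β) / 2) • a) - 1) := by
  rw [Paper.phi, if_neg hβ, expG_eq_exp]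

lemma phi_injective {β : ℝ} (hβ : β ≠ 1) :
    Function.Injective (Paper.phi β (Y := Y)) := by
  intro a a' h
  have hs : (1 : ℝ) - β ≠ 0 := sub_ne_zero.2 (Ne.symm hβ)
  ext x
  have hx := congrArg (fun f : BoundedContinuousFunction Y ℝ => f x) h
  simp only [Paper.phi, if_neg hβ, BoundedContinuousFunction.coe_smul, Pi.smul_apply,
    BoundedContinuousFunction.coe_sub, Pi.sub_apply, Paper.expG_apply,
    BoundedContinuousFunction.coe_one, Pi.one_apply, smul_eq_mul] at hx
  have h2 : Real.exp ((1 - β) / 2 * a x) = Real.exp ((1 - β) / 2 * a' x) := by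
    have := mul_left_cancel₀ (div_ne_zero two_ne_zero hs) hx
    linarith
  have h3 := Real.exp_injective h2
  exact mul_left_cancel₀ (div_ne_zero hs two_ne_zero) h3

lemma hasStrictFDerivAt_phi {β : ℝ} (hβ : β ≠ 1) (p : Y →ᵇ ℝ) :
    HasStrictFDerivAt (Paper.phi β)
      (ContinuousLinearMap.mul ℝ (Y →ᵇ ℝ) (exp (((1 - β) / 2) • p))) p := by
  have hs : (1 : ℝ) - β ≠ 0 := sub_ne_zero.2 (Ne.symm hβ)
  set s : ℝ := (1 - β) / 2 with hsdef
  have h1 : HasStrictFDerivAt (fun a : Y →ᵇ ℝ => s • a)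
      (s • ContinuousLinearMap.id ℝ (Y →ᵇ ℝ)) p := by
    exact (s • ContinuousLinearMap.id ℝ (Y →ᵇ ℝ)).hasStrictFDerivAt (x := p)
  have h0 : HasStrictFDerivAt (exp : (Y →ᵇ ℝ) → (Y →ᵇ ℝ))
      (exp (s • p) • (1 : (Y →ᵇ ℝ) →L[ℝ] (Y →ᵇ ℝ))) (s • p) :=
    hasStrictFDerivAt_exp
  have h2 : HasStrictFDerivAt (fun a : Y →ᵇ ℝ => exp (s • a))
      ((exp (s • p) • (1 : (Y →ᵇ ℝ) →L[ℝ] (Y →ᵇ ℝ))).comp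
        (s • ContinuousLinearMap.id ℝ (Y →ᵇ ℝ))) p :=
    h0.comp p h1
  have h3 : HasStrictFDerivAt (fun a : Y →ᵇ ℝ => (2 / (1 - β)) • (exp (s • a) - 1))
      ((2 / (1 - β)) • ((exp (s • p) • (1 : (Y →ᵇ ℝ) →L[ℝ] (Y →ᵇ ℝ))).comp
        (s • ContinuousLinearMap.id ℝ (Y →ᵇ ℝ)))) p :=
    (h2.sub_const 1).const_smul (2 / (1 - β))
  have key : Paper.phi β = fun a : Y →ᵇ ℝ => (2 / (1 - β)) • (exp (s • a) - 1) := by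
    funext a; rw [phi_eq' hβ]
  rw [key]
  convert h3 using 1
  case e'_5 => rfl
  case e'_9 => rfl
  ext u
  simp only [ContinuousLinearMap.smul_apply, ContinuousLinearMap.comp_apply,
    ContinuousLinearMap.coe_smul', Pi.smul_apply, ContinuousLinearMap.coe_id', id_eq,
    ContinuousLinearMap.one_apply, ContinuousLinearMap.mul_apply', smul_eq_mul]
  rw [mul_smul_comm, smul_smul]
  have hc : (2 / (1 - β)) * s = 1 := by rw [hsdef]; field_simp
  rw [hc, one_smul]

end Aux

/-- for fixed `α ≠ ±1` and `b ∈ G`, the function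
`f(c) = D^α(φ_α⁻¹(c)‖b)` is Fréchet differentiable on the open set `φ_α(G)`, with
derivative at `c = φ_α(a)` the functional `u ↦ ∫ (φ_{−α}(a) − φ_{−α}(b))·u dμ`. -/
theorem statement_9 {X : Type*} [NormedAddCommGroup X] [NormedSpace ℝ X]
    [MeasurableSpace X] [OpensMeasurableSpace X]
    (B : Set X) (hB : IsOpen B) (hBne : B.Nonempty)
    (μ : Measure B) [IsProbabilityMeasure μ]
    (α : ℝ) (hα1 : α ≠ 1) (hα2 : α ≠ -1) (b : BoundedContinuousFunction B ℝ) :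
    ∃ ψ : BoundedContinuousFunction B ℝ → BoundedContinuousFunction B ℝ,
      (∀ a, ψ (Paper.phi α a) = a) ∧
      ∀ a : BoundedContinuousFunction B ℝ,
        ∃ D : BoundedContinuousFunction B ℝ →L[ℝ] ℝ,
          (∀ u : BoundedContinuousFunction B ℝ,
            D u = ∫ x, (Paper.phi (-α) a x - Paper.phi (-α) b x) * u x ∂μ) ∧
          HasFDerivAt (fun c => Paper.Dalpha μ α (ψ c) b) D (Paper.phi α a) := by
  classical
  open NormedSpace in
  -- the global inverse of `phi α`
  let ψ : (↥B →ᵇ ℝ) → (↥B →ᵇ ℝ) :=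
    fun c => if h : ∃ a, Paper.phi α a = c then h.choose else 0
  have hψ : ∀ a : ↥B →ᵇ ℝ, ψ (Paper.phi α a) = a := by
    intro a
    have h : ∃ a', Paper.phi α a' = Paper.phi α a := ⟨a, rfl⟩
    simp only [ψ, dif_pos h]
    exact phi_injective hα1 h.choose_spec
  refine ⟨ψ, hψ, ?_⟩
  intro a
  -- the integration functional
  have hInt : ∀ f : ↥B →ᵇ ℝ, Integrable (fun x => f x) μ := fun f => f.integrable μ
  let J : (↥B →ᵇ ℝ) →L[ℝ] ℝ := LinearMap.mkContinuous
    { toFun := fun f : ↥B →ᵇ ℝ => ∫ x, f x ∂μ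
      map_add' := fun f g => by
        simp only [BoundedContinuousFunction.coe_add, Pi.add_apply]
        exact integral_add (hInt f) (hInt g)
      map_smul' := fun c f => by
        simp only [BoundedContinuousFunction.coe_smul, Pi.smul_apply, RingHom.id_apply]
        exact integral_smul c _ }
    1 (fun f => by
      simp only [LinearMap.coe_mk, AddHom.coe_mk, one_mul]
      calc ‖∫ x, f x ∂μ‖ ≤ (μ Set.univ).toReal * ‖f‖ := f.norm_integral_le_mul_norm μ
        _ = ‖f‖ := by simp)
  have hJ : ∀ f : ↥B →ᵇ ℝ, J f = ∫ x, f x ∂μ := fun f => rfl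
  -- abbreviations
  set cb : ↥B →ᵇ ℝ := Paper.phi (-α) b with hcb
  set Cb : ℝ := (2 / (1 - α)) * ∫ x, (Paper.phi (-1) b x - Paper.phi (-α) b x) ∂μ with hCb
  set e₁ : ↥B →ᵇ ℝ := exp (((1 - (-1 : ℝ)) / 2) • a) with he₁
  set e : ↥B →ᵇ ℝ := exp (((1 - α) / 2) • a) with he
  set e' : ↥B →ᵇ ℝ := exp (-(((1 - α) / 2) • a)) with he'
  have hee' : e * e' = 1 := by
    rw [he, he', ← exp_add, add_neg_cancel, exp_zero]
  have he'e : e' * e = 1 := by rw [mul_comm]; exact hee'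
  -- a nice formula for the divergence
  set F : (↥B →ᵇ ℝ) → ℝ := fun a' =>
    (2 / (1 + α)) * J (Paper.phi (-1) a' - Paper.phi α a') + Cb
      - J (cb * Paper.phi α a') with hF
  have hFg : ∀ a' : ↥B →ᵇ ℝ, Paper.Dalpha μ α a' b = F a' := by
    intro a'
    have h1 : J (Paper.phi (-1) a' - Paper.phi α a')
        = ∫ x, (Paper.phi (-1) a' x - Paper.phi α a' x) ∂μ := by
      rw [hJ]
      apply integral_congr_ae
      filter_upwards with x
      simp
    have h2 : J (cb * Paper.phi α a') = ∫ x, Paper.phi α a' x * Paper.phi (-α) b x ∂μ := by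
      rw [hJ]
      apply integral_congr_ae
      filter_upwards with x
      simp [hcb, mul_comm]
    rw [hF]
    simp only [Paper.Dalpha, h1, h2, hCb]
  -- derivatives of the building blocks
  have hd1 : HasStrictFDerivAt (Paper.phi (-1 : ℝ))
      (ContinuousLinearMap.mul ℝ (↥B →ᵇ ℝ) e₁) a :=
    hasStrictFDerivAt_phi (by norm_num) a
  have hd2 : HasStrictFDerivAt (Paper.phi α)
      (ContinuousLinearMap.mul ℝ (↥B →ᵇ ℝ) e) a :=
    hasStrictFDerivAt_phi hα1 a
  set DF : (↥B →ᵇ ℝ) →L[ℝ] ℝ :=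
    (2 / (1 + α)) • (J.comp (ContinuousLinearMap.mul ℝ (↥B →ᵇ ℝ) e₁
        - ContinuousLinearMap.mul ℝ (↥B →ᵇ ℝ) e))
      - J.comp ((ContinuousLinearMap.mul ℝ (↥B →ᵇ ℝ) cb).comp
        (ContinuousLinearMap.mul ℝ (↥B →ᵇ ℝ) e)) with hDF
  have hFd : HasStrictFDerivAt F DF a := by
    have t1 : HasStrictFDerivAt (fun a' : ↥B →ᵇ ℝ => Paper.phi (-1 : ℝ) a' - Paper.phi α a')
        (ContinuousLinearMap.mul ℝ (↥B →ᵇ ℝ) e₁ - ContinuousLinearMap.mul ℝ (↥B →ᵇ ℝ) e) a :=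
      hd1.sub hd2
    have t1' := (J.hasStrictFDerivAt.comp a t1).const_mul (2 / (1 + α))
    have t3 : HasStrictFDerivAt (fun a' : ↥B →ᵇ ℝ => cb * Paper.phi α a')
        ((ContinuousLinearMap.mul ℝ (↥B →ᵇ ℝ) cb).comp
          (ContinuousLinearMap.mul ℝ (↥B →ᵇ ℝ) e)) a :=
      (ContinuousLinearMap.mul ℝ (↥B →ᵇ ℝ) cb).hasStrictFDerivAt.comp a hd2
    have t3' := J.hasStrictFDerivAt.comp a t3
    exact (t1'.add_const Cb).sub t3'
  -- the local inverse
  let N : (↥B →ᵇ ℝ) ≃L[ℝ] (↥B →ᵇ ℝ) := ContinuousLinearEquiv.equivOfInverse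
    (ContinuousLinearMap.mul ℝ (↥B →ᵇ ℝ) e) (ContinuousLinearMap.mul ℝ (↥B →ᵇ ℝ) e')
    (fun u => by
      simp only [ContinuousLinearMap.mul_apply', ← mul_assoc, he'e, one_mul])
    (fun u => by
      simp only [ContinuousLinearMap.mul_apply', ← mul_assoc, hee', one_mul])
  have hphiN : HasStrictFDerivAt (Paper.phi α) (N : (↥B →ᵇ ℝ) →L[ℝ] (↥B →ᵇ ℝ)) a := hd2
  set ginv := hphiN.localInverse (Paper.phi α) N a with hginvdef
  have hginv : HasStrictFDerivAt ginv (N.symm : (↥B →ᵇ ℝ) →L[ℝ] (↥B →ᵇ ℝ)) (Paper.phi α a) :=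
    hphiN.to_localInverse
  have himg : ginv (Paper.phi α a) = a := hphiN.localInverse_apply_image
  have hev : ∀ᶠ y in nhds (Paper.phi α a), Paper.phi α (ginv y) = y :=
    hphiN.eventually_right_inverse
  have hψg : ∀ᶠ y in nhds (Paper.phi α a), ψ y = ginv y := by
    filter_upwards [hev] with y hy
    nth_rewrite 1 [← hy]
    exact hψ _
  -- the composite has the derivative
  have hFd' : HasFDerivAt F DF (ginv (Paper.phi α a)) := by
    rw [himg]; exact hFd.hasFDerivAt
  have hcomp : HasFDerivAt (F ∘ ginv)
      (DF.comp (N.symm : (↥B →ᵇ ℝ) →L[ℝ] (↥B →ᵇ ℝ))) (Paper.phi α a) :=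
    HasFDerivAt.comp (Paper.phi α a) hFd' hginv.hasFDerivAt
  have heq : (fun c => Paper.Dalpha μ α (ψ c) b) =ᶠ[nhds (Paper.phi α a)] (F ∘ ginv) := by
    filter_upwards [hψg] with y hy
    simp only [Function.comp_apply, hFg, hy]
  have hmain : HasFDerivAt (fun c => Paper.Dalpha μ α (ψ c) b)
      (DF.comp (N.symm : (↥B →ᵇ ℝ) →L[ℝ] (↥B →ᵇ ℝ))) (Paper.phi α a) :=
    hcomp.congr_of_eventuallyEq heq
  refine ⟨DF.comp (N.symm : (↥B →ᵇ ℝ) →L[ℝ] (↥B →ᵇ ℝ)), ?_, hmain⟩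
  -- identification of the derivative
  intro u
  have hNsymm : (N.symm : (↥B →ᵇ ℝ) →L[ℝ] (↥B →ᵇ ℝ)) u = e' * u := rfl
  have hu1 : e * (e' * u) = u := by rw [← mul_assoc, hee', one_mul]
  set E₂ : ↥B →ᵇ ℝ := exp (((1 + α) / 2) • a) with hE₂
  have hu2 : e₁ * (e' * u) = E₂ * u := by
    rw [← mul_assoc, he₁, he', ← exp_add, hE₂]
    congr 2
    module
  have expand : (DF.comp (N.symm : (↥B →ᵇ ℝ) →L[ℝ] (↥B →ᵇ ℝ))) u
      = (2 / (1 + α)) * J (e₁ * (e' * u) - e * (e' * u)) - J (cb * (e * (e' * u))) := by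
    simp only [ContinuousLinearMap.comp_apply, hNsymm, hDF, ContinuousLinearMap.sub_apply,
      ContinuousLinearMap.smul_apply, ContinuousLinearMap.mul_apply', smul_eq_mul]
  rw [expand, hu1, hu2]
  -- now identify with the target integral
  have hnegα : (-α : ℝ) ≠ 1 := fun h => hα2 (by linarith)
  have hphiA : Paper.phi (-α) a = (2 / (1 + α)) • (E₂ - 1) := by
    rw [phi_eq' hnegα]
    have h1 : (1 : ℝ) - -α = 1 + α := by ring
    rw [h1, hE₂]
  have hRHS : (∫ x, (Paper.phi (-α) a x - Paper.phi (-α) b x) * u x ∂μ)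
      = J ((Paper.phi (-α) a - cb) * u) := by
    rw [hJ]
    apply integral_congr_ae
    filter_upwards with x
    simp [hcb]
  rw [hRHS, hphiA]
  have hBCF : ((2 / (1 + α)) • (E₂ - 1) - cb) * u
      = (2 / (1 + α)) • (E₂ * u - u) - cb * u := by
    rw [sub_mul, smul_mul_assoc, sub_mul, one_mul]
  rw [hBCF]
  simp only [map_sub, _root_.map_smul, smul_eq_mul]
end
end

section
/- Fix α ∈ ℝ with α ≠ ±1 and b ∈ G. The function f : φ_α(G) → ℝ defined by f(c) := D^α(φ_α⁻¹(c)‖b) is twice Fréchet differentiable on the open set φ_α(G), and for every a ∈ G its second Fréchet derivative at the point c = φ_α(a) is the continuous bilinear form (u, v) ↦ ∫_B exp_G(α·a)·u·v dμ. If moreover μ has full support, i.e. μ(A) > 0 for every nonempty open A ⊆ B, then f is strictly convex on the convex set φ_α(G), i.e. f((1−t)c₀ + t c₁) < (1−t)f(c₀) + t f(c₁) for all distinct c₀, c₁ ∈ φ_α(G) and t ∈ (0,1). -/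
open MeasureTheory BoundedContinuousFunction

noncomputable section

namespace Stmt10Aux
open Paper

variable {Y : Type*} [TopologicalSpace Y]

lemma exists_bound (g : ℝ → ℝ) (hg : Continuous g) (c : BoundedContinuousFunction Y ℝ) :
    ∃ M, ∀ x : Y, ‖g (c x)‖ ≤ M := by
  obtain ⟨M, hM⟩ := isCompact_Icc.exists_bound_of_continuousOn
    (s := Set.Icc (-‖c‖) ‖c‖) hg.continuousOn
  refine ⟨M, fun x => hM _ ?_⟩
  have := c.norm_coe_le_norm x
  rw [Real.norm_eq_abs] at this
  exact ⟨neg_le_of_abs_le this, le_of_abs_le this⟩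

/-- post-composition of a bounded continuous function with a continuous `g : ℝ → ℝ`. -/
def compBCF (g : ℝ → ℝ) (hg : Continuous g) (c : BoundedContinuousFunction Y ℝ) :
    BoundedContinuousFunction Y ℝ :=
  BoundedContinuousFunction.ofNormedAddCommGroup (fun x => g (c x)) (hg.comp c.continuous)
    (exists_bound g hg c).choose (exists_bound g hg c).choose_spec

@[simp] lemma compBCF_apply (g : ℝ → ℝ) (hg : Continuous g) (c : BoundedContinuousFunction Y ℝ)
    (x : Y) : compBCF g hg c x = g (c x) := rfl

section Integrals

variable [MeasurableSpace Y] [OpensMeasurableSpace Y] {μ : Measure Y} [IsFiniteMeasure μ]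

lemma integrable_comp (g : ℝ → ℝ) (hg : Continuous g) (c : BoundedContinuousFunction Y ℝ) :
    Integrable (fun x => g (c x)) μ :=
  (compBCF g hg c).integrable μ

lemma integrable_bcf (h : BoundedContinuousFunction Y ℝ) : Integrable (fun x => h x) μ :=
  h.integrable μ

lemma integrable_mul (h u : BoundedContinuousFunction Y ℝ) :
    Integrable (fun x => h x * u x) μ :=
  (h * u).integrable μ

/-- The fundamental bilinear form `T w u = ∫ w·u dμ`. -/
def TL (μ : Measure Y) [IsFiniteMeasure μ] :
    BoundedContinuousFunction Y ℝ →L[ℝ] BoundedContinuousFunction Y ℝ →L[ℝ] ℝ :=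
  LinearMap.mkContinuous₂
    (LinearMap.mk₂ ℝ (fun w u => ∫ x, w x * u x ∂μ)
      (fun w w' u => by
        simp_rw [coe_add, Pi.add_apply, add_mul]
        exact integral_add (integrable_mul w u) (integrable_mul w' u))
      (fun r w u => by
        simp_rw [coe_smul, smul_eq_mul, mul_assoc]
        exact integral_const_mul r _)
      (fun w u u' => by
        simp_rw [coe_add, Pi.add_apply, mul_add]
        exact integral_add (integrable_mul w u) (integrable_mul w u'))
      (fun r w u => by
        simp_rw [coe_smul, smul_eq_mul]
        rw [← integral_const_mul]
        congr 1; ext x; ring))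
    ((μ Set.univ).toReal)
    (fun w u => by
      have : ∀ x, ‖w x * u x‖ ≤ ‖w‖ * ‖u‖ := fun x => by
        rw [norm_mul]
        exact mul_le_mul (w.norm_coe_le_norm x) (u.norm_coe_le_norm x) (norm_nonneg _)
          (norm_nonneg _)
      calc ‖∫ x, w x * u x ∂μ‖ ≤ (‖w‖ * ‖u‖) * (μ Set.univ).toReal :=
            norm_integral_le_of_norm_le_const (Filter.Eventually.of_forall this)
        _ = (μ Set.univ).toReal * ‖w‖ * ‖u‖ := by ring)

@[simp] lemma TL_apply (w u : BoundedContinuousFunction Y ℝ) :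
    TL μ w u = ∫ x, w x * u x ∂μ := rfl

lemma TL_opnorm (w : BoundedContinuousFunction Y ℝ) :
    ‖TL μ w‖ ≤ (μ Set.univ).toReal * ‖w‖ := by
  refine ContinuousLinearMap.opNorm_le_bound _ (by positivity) (fun u => ?_)
  have : ∀ x, ‖w x * u x‖ ≤ ‖w‖ * ‖u‖ := fun x => by
    rw [norm_mul]
    exact mul_le_mul (w.norm_coe_le_norm x) (u.norm_coe_le_norm x) (norm_nonneg _) (norm_nonneg _)
  calc ‖TL μ w u‖ ≤ (‖w‖ * ‖u‖) * (μ Set.univ).toReal :=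
        norm_integral_le_of_norm_le_const (Filter.Eventually.of_forall this)
    _ = (μ Set.univ).toReal * ‖w‖ * ‖u‖ := by ring

end Integrals

/-- second-order Taylor bound on a convex set. -/
lemma taylor2 {s : Set ℝ} (hs : Convex ℝ s) {g g' g'' : ℝ → ℝ}
    (hd : ∀ t ∈ s, HasDerivAt g (g' t) t) (hd' : ∀ t ∈ s, HasDerivAt g' (g'' t) t)
    {M : ℝ} (hM : ∀ t ∈ s, |g'' t| ≤ M) {t u : ℝ} (ht : t ∈ s) (htu : t + u ∈ s) :
    |g (t + u) - g t - g' t * u| ≤ M * u ^ 2 := by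
  have hseg : segment ℝ t (t + u) ⊆ s := hs.segment_subset ht htu
  have hsegconv : Convex ℝ (segment ℝ t (t + u)) := convex_segment _ _
  have hA : ∀ w ∈ s, |g' w - g' t| ≤ M * |w - t| := by
    intro w hw
    have := hs.norm_image_sub_le_of_norm_hasDerivWithin_le
      (fun z hz => (hd' z hz).hasDerivWithinAt)
      (fun z hz => by simpa [Real.norm_eq_abs] using hM z hz) ht hw
    simpa [Real.norm_eq_abs] using this
  have hB : ∀ w ∈ segment ℝ t (t + u), |w - t| ≤ |u| := by
    intro w hw
    obtain ⟨a, b, ha, hb, hab, rfl⟩ := hw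
    have : a • t + b • (t + u) - t = b * u := by
      have : a = 1 - b := by linarith
      subst this; simp; ring
    rw [this, abs_mul]
    calc |b| * |u| ≤ 1 * |u| := by
          apply mul_le_mul_of_nonneg_right _ (abs_nonneg _)
          rw [abs_of_nonneg hb]; linarith
      _ = |u| := one_mul _
  have key := hsegconv.norm_image_sub_le_of_norm_hasDerivWithin_le
    (f := fun w => g w - g' t * w) (f' := fun w => g' w - g' t) (C := M * |u|)
    (fun z hz => (((hd z (hseg hz)).sub ((hasDerivAt_id z).const_mul (g' t))).congr_deriv
        (by ring)).hasDerivWithinAt)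
    (fun z hz => by
      rw [Real.norm_eq_abs]
      calc |g' z - g' t| ≤ M * |z - t| := hA z (hseg hz)
        _ ≤ M * |u| := mul_le_mul_of_nonneg_left (hB z hz)
            ((abs_nonneg _).trans (hM z (hseg hz))))
    (left_mem_segment ℝ t (t + u)) (right_mem_segment ℝ t (t + u))
  have : ‖(g (t + u) - g' t * (t + u)) - (g t - g' t * t)‖ ≤ M * |u| * ‖t + u - t‖ := key
  rw [Real.norm_eq_abs, Real.norm_eq_abs] at this
  rw [add_sub_cancel_left] at this
  calc |g (t + u) - g t - g' t * u| = |(g (t + u) - g' t * (t + u)) - (g t - g' t * t)| := by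
        rw [show g (t + u) - g t - g' t * u
            = (g (t + u) - g' t * (t + u)) - (g t - g' t * t) by ring]
    _ ≤ M * |u| * |u| := this
    _ = M * u ^ 2 := by rw [mul_assoc, abs_mul_abs_self]; ring

lemma hasDerivAt_pow1 (β p : ℝ) {t : ℝ} (h : 0 < 1 + β * t) :
    HasDerivAt (fun s => (1 + β * s) ^ p) (p * β * (1 + β * t) ^ (p - 1)) t := by
  have h1 : HasDerivAt (fun s : ℝ => 1 + β * s) β t := by
    simpa using ((hasDerivAt_id t).const_mul β).const_add 1
  have h2 := Real.hasDerivAt_rpow_const (x := 1 + β * t) (p := p) (Or.inl h.ne')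
  have := h2.comp t h1
  simpa [Function.comp_def, mul_comm, mul_assoc, mul_left_comm] using this

/-- the truncated power function. -/
def W (β δ q t : ℝ) : ℝ := Real.exp (q * Real.log (max (1 + β * t) δ))

lemma W_pos (β δ q t : ℝ) : 0 < W β δ q t := Real.exp_pos _

lemma W_eq_rpow {β δ q t : ℝ} (hδ : 0 < δ) (h : δ ≤ 1 + β * t) :
    W β δ q t = (1 + β * t) ^ q := by
  have h0 : 0 < 1 + β * t := hδ.trans_le h
  rw [W, max_eq_left h, Real.rpow_def_of_pos h0, mul_comm]

lemma W_cont {β δ : ℝ} (q : ℝ) (hδ : 0 < δ) : Continuous (W β δ q) := by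
  apply Real.continuous_exp.comp
  apply Continuous.mul continuous_const
  rw [continuous_iff_continuousAt]
  intro t
  have hmax : Continuous (fun s : ℝ => max (1 + β * s) δ) :=
    Continuous.max (by continuity) continuous_const
  exact ContinuousAt.comp (g := Real.log) (f := fun s => max (1 + β * s) δ)
    (Real.continuousAt_log (by positivity)) hmax.continuousAt

lemma W_hasDerivAt {β δ q t : ℝ} (hδ : 0 < δ) (h : δ < 1 + β * t) :
    HasDerivAt (W β δ q) (q * β * W β δ (q - 1) t) t := by
  have h0 : 0 < 1 + β * t := hδ.trans h
  have hopen : IsOpen {s : ℝ | δ < 1 + β * s} := isOpen_lt continuous_const (by continuity)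
  have hev : W β δ q =ᶠ[nhds t] fun s => (1 + β * s) ^ q := by
    filter_upwards [hopen.mem_nhds h] with s hs
    exact W_eq_rpow hδ (le_of_lt hs)
  have hd := (hasDerivAt_pow1 β q h0).congr_of_eventuallyEq hev
  rwa [← W_eq_rpow hδ (le_of_lt h)] at hd

lemma phi_apply {α : ℝ} (hα : α ≠ 1) (a : BoundedContinuousFunction Y ℝ) (x : Y) :
    phi α a x = (2 / (1 - α)) * (Real.exp ((1 - α) / 2 * a x) - 1) := by
  simp [phi, hα, smul_eq_mul]

lemma phi_neg_one_apply (a : BoundedContinuousFunction Y ℝ) (x : Y) :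
    phi (-1) a x = Real.exp (a x) - 1 := by
  rw [phi_apply (by norm_num)]
  norm_num

lemma one_add_beta_phi {α : ℝ} (hα : α ≠ 1) (a : BoundedContinuousFunction Y ℝ) (x : Y) :
    1 + (1 - α) / 2 * phi α a x = Real.exp ((1 - α) / 2 * a x) := by
  have h1 : (1 : ℝ) - α ≠ 0 := sub_ne_zero.2 (Ne.symm hα)
  rw [phi_apply hα]
  field_simp
  ring

lemma phi_injective {α : ℝ} (hα : α ≠ 1) :
    Function.Injective (phi (Y := Y) α) := by
  intro a a' h
  have h1 : (1 : ℝ) - α ≠ 0 := sub_ne_zero.2 (Ne.symm hα)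
  ext x
  have h2 : Real.exp ((1 - α) / 2 * a x) = Real.exp ((1 - α) / 2 * a' x) := by
    rw [← one_add_beta_phi hα, ← one_add_beta_phi hα, h]
  have h3 := Real.exp_injective h2
  have : (1 - α) / 2 ≠ 0 := by simpa using h1
  exact mul_left_cancel₀ this h3

lemma mem_range_phi {α : ℝ} (hα : α ≠ 1) {δ : ℝ} (hδ : 0 < δ)
    (c : BoundedContinuousFunction Y ℝ) (h : ∀ x, δ ≤ 1 + (1 - α) / 2 * c x) :
    ∃ a, phi α a = c := by
  have h1 : (1 : ℝ) - α ≠ 0 := sub_ne_zero.2 (Ne.symm hα)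
  have hgc : Continuous (fun t : ℝ => (2 / (1 - α)) * Real.log (max (1 + (1 - α) / 2 * t) δ)) := by
    apply Continuous.mul continuous_const
    rw [continuous_iff_continuousAt]
    intro t
    have hmax : Continuous (fun s : ℝ => max (1 + (1 - α) / 2 * s) δ) :=
      Continuous.max (by continuity) continuous_const
    exact ContinuousAt.comp (g := Real.log) (f := fun s => max (1 + (1 - α) / 2 * s) δ)
      (Real.continuousAt_log (by positivity)) hmax.continuousAt
  refine ⟨compBCF _ hgc c, ?_⟩
  ext x
  have hx := h x
  have h0 : (0 : ℝ) < 1 + (1 - α) / 2 * c x := hδ.trans_le hx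
  rw [phi_apply hα]
  show (2 / (1 - α)) * (Real.exp ((1 - α) / 2 *
      ((2 / (1 - α)) * Real.log (max (1 + (1 - α) / 2 * c x) δ))) - 1) = c x
  rw [max_eq_left hx]
  have hsimp : (1 - α) / 2 * ((2 / (1 - α)) * Real.log (1 + (1 - α) / 2 * c x))
      = Real.log (1 + (1 - α) / 2 * c x) := by
    field_simp
  rw [hsimp, Real.exp_log h0]
  field_simp
  ring

lemma strictconv_pow {β K q : ℝ} (hq : q * β = 1) (hK : K * (1 - β) = 1) :
    StrictConvexOn ℝ {t : ℝ | 0 < 1 + β * t} (fun t => K * (1 + β * t) ^ q) := by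
  set I : Set ℝ := {t : ℝ | 0 < 1 + β * t} with hI
  have hIopen : IsOpen I := isOpen_lt continuous_const (by continuity)
  have hIconv : Convex ℝ I := by
    intro x hx y hy a b ha hb hab
    simp only [hI, Set.mem_setOf_eq] at *
    have h1 : 0 ≤ a * (1 + β * x) := mul_nonneg ha (le_of_lt hx)
    have h2 : 0 ≤ b * (1 + β * y) := mul_nonneg hb (le_of_lt hy)
    simp only [smul_eq_mul]
    rcases ha.lt_or_eq with ha' | ha'
    · nlinarith [mul_pos ha' hx, h2]
    · have hb' : b = 1 := by rw [← ha'] at hab; linarith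
      rw [← ha', hb']
      simp only [zero_mul, one_mul, zero_add]
      linarith [hy]
  have hd1 : ∀ s ∈ I, HasDerivAt (fun t => K * (1 + β * t) ^ q)
      (K * (1 + β * s) ^ (q - 1)) s := by
    intro s hs
    have := (hasDerivAt_pow1 β q hs).const_mul K
    rwa [show K * (q * β * (1 + β * s) ^ (q - 1)) = K * (1 + β * s) ^ (q - 1) by
      rw [hq, one_mul]] at this
  have hd2 : ∀ s ∈ I, HasDerivAt (fun t => K * (1 + β * t) ^ (q - 1))
      ((1 + β * s) ^ (q - 2)) s := by
    intro s hs
    have := (hasDerivAt_pow1 β (q - 1) hs).const_mul K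
    rwa [show K * ((q - 1) * β * (1 + β * s) ^ (q - 1 - 1)) = (1 + β * s) ^ (q - 2) by
      rw [sub_mul, hq, one_mul, show q - 1 - 1 = q - 2 by ring, ← mul_assoc,
        show K * (1 - β) = 1 from hK, one_mul]] at this
  apply strictConvexOn_of_deriv2_pos hIconv
  · exact fun s hs => ((hd1 s hs).continuousAt).continuousWithinAt
  · intro t ht
    rw [hIopen.interior_eq] at ht
    have hev : deriv (fun t => K * (1 + β * t) ^ q) =ᶠ[nhds t]
        (fun s => K * (1 + β * s) ^ (q - 1)) := by
      filter_upwards [hIopen.mem_nhds ht] with s hs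
      exact (hd1 s hs).deriv
    have h2 : deriv^[2] (fun t => K * (1 + β * t) ^ q) t
        = deriv (deriv (fun t => K * (1 + β * t) ^ q)) t := by
      simp [Function.iterate_succ, Function.iterate_zero, Function.comp]
    rw [h2, ← Filter.EventuallyEq.deriv_eq hev.symm, (hd2 t ht).deriv]
    exact Real.rpow_pos_of_pos ht _

lemma convex_halfspace_beta (β δ : ℝ) : Convex ℝ {t : ℝ | δ ≤ 1 + β * t} := by
  intro x hx y hy a b ha hb hab
  simp only [Set.mem_setOf_eq] at *
  simp only [smul_eq_mul]
  have h3 : a * δ + b * δ = δ := by rw [← add_mul, hab, one_mul]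
  nlinarith [mul_le_mul_of_nonneg_left hx ha, mul_le_mul_of_nonneg_left hy hb, h3]

end Stmt10Aux

set_option maxHeartbeats 2000000 in
/-- for fixed `α ≠ ±1` and `b ∈ G`, the function
`f(c) = D^α(φ_α⁻¹(c)‖b)` is twice Fréchet differentiable on `φ_α(G)`, with second
derivative at `c = φ_α(a)` the bilinear form `(u, v) ↦ ∫ exp_G(α·a)·u·v dμ`; if
moreover `μ` has full support, then `f` is strictly convex on the convex set
`φ_α(G)`. -/
theorem statement_10 {X : Type*} [NormedAddCommGroup X] [NormedSpace ℝ X]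
    [MeasurableSpace X] [OpensMeasurableSpace X]
    (B : Set X) (hB : IsOpen B) (hBne : B.Nonempty)
    (μ : Measure B) [IsProbabilityMeasure μ]
    (α : ℝ) (hα1 : α ≠ 1) (hα2 : α ≠ -1) (b : BoundedContinuousFunction B ℝ) :
    ∃ ψ : BoundedContinuousFunction B ℝ → BoundedContinuousFunction B ℝ,
      (∀ a, ψ (Paper.phi α a) = a) ∧
      (∀ a : BoundedContinuousFunction B ℝ,
        ∃ D₂ : BoundedContinuousFunction B ℝ →L[ℝ]
                 BoundedContinuousFunction B ℝ →L[ℝ] ℝ,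
          (∀ u v : BoundedContinuousFunction B ℝ,
            D₂ u v = ∫ x, Real.exp (α * a x) * u x * v x ∂μ) ∧
          HasFDerivAt (fderiv ℝ (fun c => Paper.Dalpha μ α (ψ c) b)) D₂
            (Paper.phi α a)) ∧
      ((∀ A : Set B, IsOpen A → A.Nonempty → 0 < μ A) →
        StrictConvexOn ℝ (Set.range (Paper.phi (Y := B) α))
          (fun c => Paper.Dalpha μ α (ψ c) b)) := by
  classical
  set β : ℝ := (1 - α) / 2 with hβdef
  have h1α : (1:ℝ) - α ≠ 0 := sub_ne_zero.2 (Ne.symm hα1)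
  have h1α' : (1:ℝ) + α ≠ 0 := fun h => hα2 (by linarith)
  have hβ : β ≠ 0 := by rw [hβdef]; simpa using h1α
  set q₀ : ℝ := 1 / β with hq₀def
  set K : ℝ := 2 / (1 + α) with hKdef
  have r1 : q₀ * β = 1 := one_div_mul_cancel hβ
  have r2 : K * (1 - β) = 1 := by
    rw [hKdef, hβdef]; field_simp; ring
  have r3 : β * (q₀ - 2) = α := by
    rw [mul_sub, mul_comm β q₀, r1, hβdef]; ring
  set ψ : BoundedContinuousFunction B ℝ → BoundedContinuousFunction B ℝ :=
    Function.invFun (Paper.phi (Y := B) α) with hψdef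
  have hψ : ∀ a, ψ (Paper.phi α a) = a :=
    Function.leftInverse_invFun (Stmt10Aux.phi_injective hα1)
  set m : BoundedContinuousFunction B ℝ := -(K • (1 : BoundedContinuousFunction B ℝ)
    + Paper.phi (-α) b) with hmdef
  have hm_apply : ∀ x, m x = -(K + Paper.phi (-α) b x) := by
    intro x
    simp [hmdef, smul_eq_mul]
  set C : ℝ := (2 / (1 - α)) * (∫ x, (Paper.phi (-1) b x - Paper.phi (-α) b x) ∂μ) - K
    with hCdef
  have key : ∀ (a : BoundedContinuousFunction B ℝ) (x : B),
      1 + β * Paper.phi α a x = Real.exp (β * a x) := by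
    intro a x
    rw [hβdef]
    exact Stmt10Aux.one_add_beta_phi hα1 a x
  -- the master representation formula
  have hrep : ∀ a : BoundedContinuousFunction B ℝ, Paper.Dalpha μ α a b
      = (∫ x, K * (1 + β * Paper.phi α a x) ^ q₀ ∂μ)
        + ((∫ x, m x * Paper.phi α a x ∂μ) + C) := by
    intro a
    have hint1 : Integrable (fun x => Real.exp (a x)) μ := (Paper.expG a).integrable μ
    have hintc : Integrable (fun x => Paper.phi α a x) μ := (Paper.phi α a).integrable μ
    have hintq : Integrable (fun x => Paper.phi α a x * Paper.phi (-α) b x) μ :=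
      Stmt10Aux.integrable_mul _ _
    have e1 : ∀ x, Paper.phi (-1) a x - Paper.phi α a x
        = Real.exp (a x) - 1 - Paper.phi α a x := fun x => by
      rw [Stmt10Aux.phi_neg_one_apply]
    have E1 : ∫ x, (Paper.phi (-1) a x - Paper.phi α a x) ∂μ
        = (∫ x, Real.exp (a x) ∂μ) - 1 - ∫ x, Paper.phi α a x ∂μ := by
      simp_rw [e1]
      have hE1a : Integrable (fun x : B => Real.exp (a x) - 1) μ :=
        hint1.sub (integrable_const 1)
      rw [integral_sub hE1a hintc, integral_sub hint1 (integrable_const 1), integral_const]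
      simp [measure_univ]
    have e2 : ∀ x : B, K * (1 + β * Paper.phi α a x) ^ q₀ = K * Real.exp (a x) := by
      intro x
      rw [key a x, Real.rpow_def_of_pos (Real.exp_pos _), Real.log_exp]
      rw [show β * a x * q₀ = (q₀ * β) * a x by ring, r1, one_mul]
    have E2 : ∫ x, K * (1 + β * Paper.phi α a x) ^ q₀ ∂μ = K * ∫ x, Real.exp (a x) ∂μ := by
      simp_rw [e2]
      exact integral_const_mul K _
    have E3 : ∫ x, m x * Paper.phi α a x ∂μ
        = -(K * ∫ x, Paper.phi α a x ∂μ) - ∫ x, Paper.phi α a x * Paper.phi (-α) b x ∂μ := by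
      have e3 : ∀ x, m x * Paper.phi α a x
          = -(K * Paper.phi α a x) - Paper.phi α a x * Paper.phi (-α) b x := fun x => by
        rw [hm_apply]; ring
      simp_rw [e3]
      have hE3a : Integrable (fun x : B => -(K * Paper.phi α a x)) μ :=
        (hintc.const_mul K).neg
      rw [integral_sub hE3a hintq, integral_neg, integral_const_mul]
    simp only [Paper.Dalpha]
    rw [E1, E2, E3, ← hKdef, hCdef]
    ring
  -- 1 + β * phi is bounded below
  have hrange_sub : ∀ a : BoundedContinuousFunction B ℝ, ∀ x : B,
      Real.exp (-(|β| * ‖a‖)) ≤ 1 + β * Paper.phi α a x := by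
    intro a x
    rw [key a x]
    apply Real.exp_le_exp.2
    have h5 : |β * a x| ≤ |β| * ‖a‖ := by
      rw [abs_mul]
      exact mul_le_mul_of_nonneg_left
        (by simpa [Real.norm_eq_abs] using a.norm_coe_le_norm x) (abs_nonneg β)
    linarith [neg_abs_le (β * a x)]
  refine ⟨ψ, hψ, ?_, ?_⟩
  · -- Part 2: second derivative
    intro a
    set c₀ := Paper.phi α a with hc₀def
    set δ : ℝ := Real.exp (-(|β| * ‖a‖)) / 2 with hδdef
    have hδpos : 0 < δ := by rw [hδdef]; positivity
    have hc₀lb : ∀ x, 2 * δ ≤ 1 + β * c₀ x := by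
      intro x
      have h := hrange_sub a x
      rw [hδdef]
      linarith
    set r : ℝ := δ / (|β| + 1) with hrdef
    have hrpos : 0 < r := by rw [hrdef]; positivity
    set R : ℝ := ‖c₀‖ + r with hRdef
    set U := Metric.ball c₀ r with hUdef
    have hUopen : IsOpen U := Metric.isOpen_ball
    have hc₀U : c₀ ∈ U := Metric.mem_ball_self hrpos
    have hβr : |β| * r ≤ δ := by
      rw [hrdef, mul_div_assoc']
      rw [div_le_iff₀ (by positivity)]
      nlinarith [abs_nonneg β, hδpos.le]
    have hU1 : ∀ c ∈ U, ∀ x : B, δ ≤ 1 + β * c x := by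
      intro c hc x
      have h1 : |c x - c₀ x| ≤ ‖c - c₀‖ := by
        simpa [Real.norm_eq_abs] using (c - c₀).norm_coe_le_norm x
      have h2 : ‖c - c₀‖ < r := by
        rw [hUdef] at hc
        simpa [dist_eq_norm] using hc
      have h5 : |β * (c x - c₀ x)| ≤ |β| * r := by
        rw [abs_mul]
        exact mul_le_mul_of_nonneg_left (h1.trans h2.le) (abs_nonneg β)
      have h6 : β * c x = β * c₀ x + β * (c x - c₀ x) := by ring
      have h7 := hc₀lb x
      have h8 := neg_abs_le (β * (c x - c₀ x))
      linarith
    have hU2 : ∀ c ∈ U, ∀ x : B, c x ∈ Set.Icc (-R) R := by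
      intro c hc x
      have h2 : ‖c - c₀‖ < r := by
        rw [hUdef] at hc
        simpa [dist_eq_norm] using hc
      have h3 : ‖c‖ ≤ R := by
        calc ‖c‖ = ‖c₀ + (c - c₀)‖ := by ring_nf
          _ ≤ ‖c₀‖ + ‖c - c₀‖ := norm_add_le _ _
          _ ≤ R := by rw [hRdef]; linarith
      have h4 : |c x| ≤ R := by
        have := c.norm_coe_le_norm x
        rw [Real.norm_eq_abs] at this
        linarith
      exact ⟨neg_le_of_abs_le h4, le_of_abs_le h4⟩
    set sset : Set ℝ := {t : ℝ | δ ≤ 1 + β * t} ∩ Set.Icc (-R) R with hssetdef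
    have hsconv : Convex ℝ sset :=
      (Stmt10Aux.convex_halfspace_beta β δ).inter (convex_Icc _ _)
    have hscomp : IsCompact sset :=
      isCompact_Icc.inter_left (isClosed_le continuous_const
        (continuous_const.add (continuous_mul_left β)))
    have hmem : ∀ c ∈ U, ∀ x : B, c x ∈ sset := fun c hc x => ⟨hU1 c hc x, hU2 c hc x⟩
    set δ2 : ℝ := δ / 2 with hδ2def
    have hδ2pos : 0 < δ2 := by rw [hδ2def]; positivity
    set F : ℝ → ℝ := fun t => K * Stmt10Aux.W β δ2 q₀ t with hFdef
    set F1 : ℝ → ℝ := fun t => K * Stmt10Aux.W β δ2 (q₀ - 1) t with hF1def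
    set F2 : ℝ → ℝ := fun t => Stmt10Aux.W β δ2 (q₀ - 2) t with hF2def
    set F3 : ℝ → ℝ := fun t => α * Stmt10Aux.W β δ2 (q₀ - 3) t with hF3def
    have hFc : Continuous F := continuous_const.mul (Stmt10Aux.W_cont (β := β) q₀ hδ2pos)
    have hF1c : Continuous F1 :=
      continuous_const.mul (Stmt10Aux.W_cont (β := β) (q₀ - 1) hδ2pos)
    have hF2c : Continuous F2 := Stmt10Aux.W_cont (β := β) (q₀ - 2) hδ2pos
    have hF3c : Continuous F3 :=
      continuous_const.mul (Stmt10Aux.W_cont (β := β) (q₀ - 3) hδ2pos)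
    have hFd : ∀ t, δ ≤ 1 + β * t → HasDerivAt F (F1 t) t := by
      intro t ht
      have h := (Stmt10Aux.W_hasDerivAt (q := q₀) hδ2pos
        (by rw [hδ2def]; linarith : δ2 < 1 + β * t)).const_mul K
      rwa [show K * (q₀ * β * Stmt10Aux.W β δ2 (q₀ - 1) t) = F1 t by
        rw [r1, one_mul, hF1def]] at h
    have hF1d : ∀ t, δ ≤ 1 + β * t → HasDerivAt F1 (F2 t) t := by
      intro t ht
      have h := (Stmt10Aux.W_hasDerivAt (q := q₀ - 1) hδ2pos
        (by rw [hδ2def]; linarith : δ2 < 1 + β * t)).const_mul K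
      rwa [show K * ((q₀ - 1) * β * Stmt10Aux.W β δ2 (q₀ - 1 - 1) t) = F2 t by
        rw [sub_mul, r1, one_mul, show q₀ - 1 - 1 = q₀ - 2 by ring, ← mul_assoc, r2, one_mul,
          hF2def]] at h
    have hF2d : ∀ t, δ ≤ 1 + β * t → HasDerivAt F2 (F3 t) t := by
      intro t ht
      have h := Stmt10Aux.W_hasDerivAt (q := q₀ - 2) hδ2pos
        (by rw [hδ2def]; linarith : δ2 < 1 + β * t)
      rwa [show (q₀ - 2) * β * Stmt10Aux.W β δ2 (q₀ - 2 - 1) t = F3 t by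
        rw [mul_comm (q₀ - 2) β, r3, show q₀ - 2 - 1 = q₀ - 3 by ring, hF3def]] at h
    obtain ⟨M₂, hM₂⟩ := hscomp.exists_bound_of_continuousOn hF2c.continuousOn
    obtain ⟨M₃, hM₃⟩ := hscomp.exists_bound_of_continuousOn hF3c.continuousOn
    obtain ⟨x₀, hx₀⟩ := hBne
    have hM₂0 : 0 ≤ M₂ := (norm_nonneg _).trans (hM₂ _ (hmem c₀ hc₀U ⟨x₀, hx₀⟩))
    have hM₃0 : 0 ≤ M₃ := (norm_nonneg _).trans (hM₃ _ (hmem c₀ hc₀U ⟨x₀, hx₀⟩))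
    -- pointwise Taylor bounds
    have htay1 : ∀ c ∈ U, ∀ u : BoundedContinuousFunction B ℝ, c + u ∈ U → ∀ x : B,
        |F ((c + u) x) - F (c x) - F1 (c x) * u x| ≤ M₂ * ‖u‖ ^ 2 := by
      intro c hc u hcu x
      have hx1 : c x ∈ sset := hmem c hc x
      have hx2 : c x + u x ∈ sset := by
        have := hmem (c + u) hcu x
        simpa using this
      have h := Stmt10Aux.taylor2 hsconv (g := F) (g' := F1) (g'' := F2)
        (fun t ht => hFd t ht.1) (fun t ht => hF1d t ht.1)
        (fun t ht => by simpa [Real.norm_eq_abs] using hM₂ t ht) hx1 hx2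
      have hux : (u x) ^ 2 ≤ ‖u‖ ^ 2 := by
        have h1 : |u x| ≤ ‖u‖ := by
          simpa [Real.norm_eq_abs] using u.norm_coe_le_norm x
        nlinarith [abs_nonneg (u x), neg_abs_le (u x), le_abs_self (u x)]
      have hcux : (c + u) x = c x + u x := by simp
      rw [hcux]
      calc |F (c x + u x) - F (c x) - F1 (c x) * u x| ≤ M₂ * (u x) ^ 2 := h
        _ ≤ M₂ * ‖u‖ ^ 2 := mul_le_mul_of_nonneg_left hux hM₂0
    have htay2 : ∀ u : BoundedContinuousFunction B ℝ, c₀ + u ∈ U → ∀ x : B,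
        |F1 ((c₀ + u) x) - F1 (c₀ x) - F2 (c₀ x) * u x| ≤ M₃ * ‖u‖ ^ 2 := by
      intro u hcu x
      have hx1 : c₀ x ∈ sset := hmem c₀ hc₀U x
      have hx2 : c₀ x + u x ∈ sset := by
        have := hmem (c₀ + u) hcu x
        simpa using this
      have h := Stmt10Aux.taylor2 hsconv (g := F1) (g' := F2) (g'' := F3)
        (fun t ht => hF1d t ht.1) (fun t ht => hF2d t ht.1)
        (fun t ht => by simpa [Real.norm_eq_abs] using hM₃ t ht) hx1 hx2
      have hux : (u x) ^ 2 ≤ ‖u‖ ^ 2 := by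
        have h1 : |u x| ≤ ‖u‖ := by
          simpa [Real.norm_eq_abs] using u.norm_coe_le_norm x
        nlinarith [abs_nonneg (u x), neg_abs_le (u x), le_abs_self (u x)]
      have hcux : (c₀ + u) x = c₀ x + u x := by simp
      rw [hcux]
      calc |F1 (c₀ x + u x) - F1 (c₀ x) - F2 (c₀ x) * u x| ≤ M₃ * (u x) ^ 2 := h
        _ ≤ M₃ * ‖u‖ ^ 2 := mul_le_mul_of_nonneg_left hux hM₃0
    -- the candidate first and second derivatives
    set w₂ : BoundedContinuousFunction B ℝ := Stmt10Aux.compBCF F2 hF2c c₀ with hw₂def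
    set D₂ : BoundedContinuousFunction B ℝ →L[ℝ] BoundedContinuousFunction B ℝ →L[ℝ] ℝ :=
      (Stmt10Aux.TL μ).comp ((ContinuousLinearMap.mul ℝ (BoundedContinuousFunction B ℝ)) w₂)
      with hD₂def
    have hD₂app : ∀ u : BoundedContinuousFunction B ℝ, D₂ u = Stmt10Aux.TL μ (w₂ * u) :=
      fun u => rfl
    set Φ : BoundedContinuousFunction B ℝ → ℝ := fun c => ∫ x, F (c x) ∂μ with hΦdef
    set gD : BoundedContinuousFunction B ℝ → (BoundedContinuousFunction B ℝ →L[ℝ] ℝ) :=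
      fun c => Stmt10Aux.TL μ (Stmt10Aux.compBCF F1 hF1c c) with hgDdef
    -- first derivative of Φ on U
    have hΦd : ∀ c ∈ U, HasFDerivAt Φ (gD c) c := by
      intro c hc
      rw [hasFDerivAt_iff_isLittleO_nhds_zero, Asymptotics.isLittleO_iff]
      intro ε hε
      have hdc : dist c c₀ < r := by rwa [hUdef, Metric.mem_ball] at hc
      have hr' : 0 < r - dist c c₀ := by linarith
      filter_upwards [Metric.ball_mem_nhds (0 : BoundedContinuousFunction B ℝ)
        (lt_min hr' (div_pos hε (by linarith : (0:ℝ) < M₂ + 1)))] with u hu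
      rw [Metric.mem_ball, dist_zero_right] at hu
      have hu1 : ‖u‖ < r - dist c c₀ := hu.trans_le (min_le_left _ _)
      have hu2 : ‖u‖ < ε / (M₂ + 1) := hu.trans_le (min_le_right _ _)
      have hcu : c + u ∈ U := by
        rw [hUdef, Metric.mem_ball]
        calc dist (c + u) c₀ ≤ dist (c + u) c + dist c c₀ := dist_triangle _ _ _
          _ = ‖u‖ + dist c c₀ := by rw [dist_eq_norm]; simp
          _ < r := by linarith
      have hint1 : Integrable (fun x => F ((c + u) x)) μ := Stmt10Aux.integrable_comp F hFc _
      have hint2 : Integrable (fun x => F (c x)) μ := Stmt10Aux.integrable_comp F hFc _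
      have hint3 : Integrable (fun x => F1 (c x) * u x) μ :=
        Stmt10Aux.integrable_mul (Stmt10Aux.compBCF F1 hF1c c) u
      have hgDc : gD c u = ∫ x, F1 (c x) * u x ∂μ := by
        rw [hgDdef]
        rfl
      have heq : Φ (c + u) - Φ c - gD c u
          = ∫ x, (F ((c + u) x) - F (c x) - F1 (c x) * u x) ∂μ := by
        rw [hgDc, hΦdef]
        have hint12 : Integrable (fun x : B => F ((c + u) x) - F (c x)) μ := hint1.sub hint2
        rw [← integral_sub hint1 hint2, ← integral_sub hint12 hint3]
      rw [heq]
      calc ‖∫ x, (F ((c + u) x) - F (c x) - F1 (c x) * u x) ∂μ‖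
          ≤ (M₂ * ‖u‖ ^ 2) * (μ Set.univ).toReal :=
            norm_integral_le_of_norm_le_const (Filter.Eventually.of_forall (fun x => by
              simpa [Real.norm_eq_abs] using htay1 c hc u hcu x))
        _ = M₂ * ‖u‖ * ‖u‖ := by simp [measure_univ]; ring
        _ ≤ ε * ‖u‖ := by
            apply mul_le_mul_of_nonneg_right _ (norm_nonneg u)
            have hpos : (0:ℝ) < M₂ + 1 := by linarith
            have h9 : (M₂ + 1) * ‖u‖ < (M₂ + 1) * (ε / (M₂ + 1)) :=
              mul_lt_mul_of_pos_left hu2 hpos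
            rw [mul_div_cancel₀ _ (ne_of_gt hpos)] at h9
            nlinarith [norm_nonneg u]
    -- second derivative of gD at c₀
    have hgDd : HasFDerivAt gD D₂ c₀ := by
      refine (hasFDerivAt_iff_isLittleO_nhds_zero (𝕜 := ℝ) (f := gD) (f' := D₂) (x := c₀)).2 ?_
      rw [Asymptotics.isLittleO_iff]
      intro ε hε
      filter_upwards [Metric.ball_mem_nhds (0 : BoundedContinuousFunction B ℝ)
        (lt_min hrpos (div_pos hε (by linarith : (0:ℝ) < M₃ + 1)))] with u hu
      rw [Metric.mem_ball, dist_zero_right] at hu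
      have hu1 : ‖u‖ < r := hu.trans_le (min_le_left _ _)
      have hu2 : ‖u‖ < ε / (M₃ + 1) := hu.trans_le (min_le_right _ _)
      have hcu : c₀ + u ∈ U := by
        rw [hUdef, Metric.mem_ball]
        have hd5 : dist (c₀ + u) c₀ = ‖u‖ := by rw [dist_eq_norm]; simp
        rw [hd5]; exact hu1
      set w : BoundedContinuousFunction B ℝ :=
        Stmt10Aux.compBCF F1 hF1c (c₀ + u) - Stmt10Aux.compBCF F1 hF1c c₀ - w₂ * u with hwdef
      have hkey : gD (c₀ + u) - gD c₀ - D₂ u = Stmt10Aux.TL μ w := by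
        simp only [hwdef, map_sub, hD₂app, hgDdef]
      rw [hkey]
      have hwnorm : ‖w‖ ≤ M₃ * ‖u‖ ^ 2 := by
        apply (BoundedContinuousFunction.norm_le (mul_nonneg hM₃0 (by positivity))).2
        intro x
        have hwx : w x = F1 ((c₀ + u) x) - F1 (c₀ x) - F2 (c₀ x) * u x := by
          simp [hwdef, hw₂def]
        rw [hwx, Real.norm_eq_abs]
        exact htay2 u hcu x
      calc ‖Stmt10Aux.TL μ w‖ ≤ (μ Set.univ).toReal * ‖w‖ := Stmt10Aux.TL_opnorm w
        _ ≤ M₃ * ‖u‖ * ‖u‖ := by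
            rw [measure_univ]
            simp only [ENNReal.toReal_one, one_mul]
            calc ‖w‖ ≤ M₃ * ‖u‖ ^ 2 := hwnorm
              _ = M₃ * ‖u‖ * ‖u‖ := by ring
        _ ≤ ε * ‖u‖ := by
            apply mul_le_mul_of_nonneg_right _ (norm_nonneg u)
            have hpos : (0:ℝ) < M₃ + 1 := by linarith
            have h9 : (M₃ + 1) * ‖u‖ < (M₃ + 1) * (ε / (M₃ + 1)) :=
              mul_lt_mul_of_pos_left hu2 hpos
            rw [mul_div_cancel₀ _ (ne_of_gt hpos)] at h9
            nlinarith [norm_nonneg u]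
    -- equality of f with its representation on U
    have hfU : ∀ c ∈ U, Paper.Dalpha μ α (ψ c) b = Φ c + (Stmt10Aux.TL μ m c + C) := by
      intro c hc
      obtain ⟨a', ha'⟩ := Stmt10Aux.mem_range_phi hα1 hδpos c
        (fun x => by rw [← hβdef]; exact hU1 c hc x)
      rw [← ha', hψ a', hrep a', ha']
      congr 1
      · simp only [hΦdef]
        apply integral_congr_ae (Filter.Eventually.of_forall (fun x => ?_))
        simp only [hFdef]
        rw [Stmt10Aux.W_eq_rpow hδ2pos (by rw [hδ2def]; linarith [hU1 c hc x])]
    -- derivative of f on U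
    have hfd : ∀ c ∈ U, HasFDerivAt (fun c' => Paper.Dalpha μ α (ψ c') b)
        (gD c + Stmt10Aux.TL μ m) c := by
      intro c hc
      have h1 : HasFDerivAt (fun c' => Φ c' + (Stmt10Aux.TL μ m c' + C))
          (gD c + Stmt10Aux.TL μ m) c :=
        (hΦd c hc).add (((Stmt10Aux.TL μ m).hasFDerivAt).add_const C)
      apply h1.congr_of_eventuallyEq
      filter_upwards [hUopen.mem_nhds hc] with c' hc'
      exact hfU c' hc'
    refine ⟨D₂, ?_, ?_⟩
    · intro u v
      rw [hD₂app, Stmt10Aux.TL_apply]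
      apply integral_congr_ae (Filter.Eventually.of_forall (fun x => ?_))
      have hmul : (w₂ * u) x = F2 (c₀ x) * u x := by simp [hw₂def]
      rw [hmul]
      have hF2x : F2 (c₀ x) = Real.exp (α * a x) := by
        simp only [hF2def]
        rw [Stmt10Aux.W_eq_rpow hδ2pos (by rw [hδ2def]; linarith [hc₀lb x]),
          key a x, Real.rpow_def_of_pos (Real.exp_pos _), Real.log_exp,
          show β * a x * (q₀ - 2) = (β * (q₀ - 2)) * a x by ring, r3]
      rw [hF2x]
    · have hev2 : fderiv ℝ (fun c => Paper.Dalpha μ α (ψ c) b) =ᶠ[nhds c₀]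
          fun c => gD c + Stmt10Aux.TL μ m := by
        filter_upwards [hUopen.mem_nhds hc₀U] with c hc
        exact (hfd c hc).fderiv
      have final : HasFDerivAt (fun c => gD c + Stmt10Aux.TL μ m) D₂ c₀ :=
        by have := HasFDerivAt.add_const (𝕜 := ℝ) (f := gD) (f' := D₂) (x := c₀) (Stmt10Aux.TL μ m) hgDd; exact this
      exact final.congr_of_eventuallyEq hev2

  · -- Part 3: strict convexity
    intro hfull
    have hrange_iff : ∀ c : BoundedContinuousFunction B ℝ,
        c ∈ Set.range (Paper.phi (Y := B) α) ↔ ∃ ε > 0, ∀ x, ε ≤ 1 + β * c x := by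
      intro c
      constructor
      · rintro ⟨a, rfl⟩
        exact ⟨Real.exp (-(|β| * ‖a‖)), Real.exp_pos _, hrange_sub a⟩
      · rintro ⟨ε, hε, h⟩
        exact Stmt10Aux.mem_range_phi hα1 hε c (fun x => by rw [← hβdef]; exact h x)
    have hconv : Convex ℝ (Set.range (Paper.phi (Y := B) α)) := by
      intro c₁ hc₁ c₂ hc₂ t₁ t₂ ht₁ ht₂ hsum
      obtain ⟨ε₁, hε₁, h₁⟩ := (hrange_iff c₁).1 hc₁
      obtain ⟨ε₂, hε₂, h₂⟩ := (hrange_iff c₂).1 hc₂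
      refine (hrange_iff _).2 ⟨min ε₁ ε₂, lt_min hε₁ hε₂, fun x => ?_⟩
      have e : (t₁ • c₁ + t₂ • c₂) x = t₁ * c₁ x + t₂ * c₂ x := by
        simp [smul_eq_mul]
      rw [e]
      have k₁ := mul_le_mul_of_nonneg_left (h₁ x) ht₁
      have k₂ := mul_le_mul_of_nonneg_left (h₂ x) ht₂
      have k₃ := mul_le_mul_of_nonneg_left (min_le_left ε₁ ε₂) ht₁
      have k₄ := mul_le_mul_of_nonneg_left (min_le_right ε₁ ε₂) ht₂
      have k₅ : t₁ * min ε₁ ε₂ + t₂ * min ε₁ ε₂ = min ε₁ ε₂ := by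
        rw [← add_mul, hsum, one_mul]
      nlinarith [k₁, k₂, k₃, k₄, k₅]
    refine ⟨hconv, ?_⟩
    intro c₁ hc₁ c₂ hc₂ hne t₁ t₂ ht₁ ht₂ hsum
    obtain ⟨ε₁, hε₁, h₁⟩ := (hrange_iff c₁).1 hc₁
    obtain ⟨ε₂, hε₂, h₂⟩ := (hrange_iff c₂).1 hc₂
    set ε := min ε₁ ε₂ with hεdef
    have hεpos : 0 < ε := lt_min hε₁ hε₂
    have h₁' : ∀ x, ε ≤ 1 + β * c₁ x := fun x => (min_le_left ε₁ ε₂).trans (h₁ x)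
    have h₂' : ∀ x, ε ≤ 1 + β * c₂ x := fun x => (min_le_right ε₁ ε₂).trans (h₂ x)
    set cm := t₁ • c₁ + t₂ • c₂ with hcmdef
    have hcm_apply : ∀ x : B, cm x = t₁ * c₁ x + t₂ * c₂ x := fun x => by
      simp [hcmdef, smul_eq_mul]
    have hcm' : ∀ x, ε ≤ 1 + β * cm x := by
      intro x
      rw [hcm_apply x]
      have k₁ := mul_le_mul_of_nonneg_left (h₁' x) ht₁.le
      have k₂ := mul_le_mul_of_nonneg_left (h₂' x) ht₂.le
      have k₅ : t₁ * ε + t₂ * ε = ε := by rw [← add_mul, hsum, one_mul]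
      nlinarith [k₁, k₂, k₅]
    have hcm_mem : cm ∈ Set.range (Paper.phi (Y := B) α) :=
      hconv hc₁ hc₂ ht₁.le ht₂.le hsum
    have hfS : ∀ c : BoundedContinuousFunction B ℝ, c ∈ Set.range (Paper.phi (Y := B) α) →
        Paper.Dalpha μ α (ψ c) b
          = (∫ x, K * (1 + β * c x) ^ q₀ ∂μ) + ((∫ x, m x * c x ∂μ) + C) := by
      rintro c ⟨a', rfl⟩
      rw [hψ a', hrep a']
    have hδε : (0:ℝ) < ε / 2 := by positivity
    set Fε : ℝ → ℝ := fun t => K * Stmt10Aux.W β (ε / 2) q₀ t with hFεdef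
    have hWc : Continuous Fε :=
      continuous_const.mul (Stmt10Aux.W_cont (β := β) q₀ hδε)
    have hFεeq : ∀ t : ℝ, ε ≤ 1 + β * t → Fε t = K * (1 + β * t) ^ q₀ := by
      intro t ht
      simp only [hFεdef]
      rw [Stmt10Aux.W_eq_rpow hδε (by linarith)]
    have hAc : ∀ c : BoundedContinuousFunction B ℝ, (∀ x, ε ≤ 1 + β * c x) →
        (∫ x, K * (1 + β * c x) ^ q₀ ∂μ) = ∫ x, Fε (c x) ∂μ := by
      intro c hc
      apply integral_congr_ae (Filter.Eventually.of_forall (fun x => ?_))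
      rw [hFεeq _ (hc x)]
    have hsc := Stmt10Aux.strictconv_pow (β := β) r1 r2
    have hmemI : ∀ (c : BoundedContinuousFunction B ℝ), (∀ x, ε ≤ 1 + β * c x) →
        ∀ x : B, c x ∈ {t : ℝ | 0 < 1 + β * t} :=
      fun c hc x => lt_of_lt_of_le hεpos (hc x)
    set gfun : B → ℝ := fun x => t₁ * Fε (c₁ x) + t₂ * Fε (c₂ x) - Fε (cm x) with hgfundef
    have hg0 : ∀ x, 0 ≤ gfun x := by
      intro x
      have h := hsc.convexOn.2 (hmemI c₁ h₁' x) (hmemI c₂ h₂' x) ht₁.le ht₂.le hsum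
      simp only [smul_eq_mul] at h
      simp only [hgfundef]
      rw [hFεeq _ (h₁' x), hFεeq _ (h₂' x), hFεeq _ (hcm' x), hcm_apply x]
      linarith [h]
    have hgc : Continuous gfun := by
      simp only [hgfundef]
      exact ((continuous_const.mul (hWc.comp c₁.continuous)).add
        (continuous_const.mul (hWc.comp c₂.continuous))).sub (hWc.comp cm.continuous)
    have hint1 : Integrable (fun x : B => Fε (c₁ x)) μ := Stmt10Aux.integrable_comp _ hWc c₁
    have hint2 : Integrable (fun x : B => Fε (c₂ x)) μ := Stmt10Aux.integrable_comp _ hWc c₂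
    have hint3 : Integrable (fun x : B => Fε (cm x)) μ := Stmt10Aux.integrable_comp _ hWc cm
    have hgint : Integrable gfun μ := by
      have h12 : Integrable (fun x : B => t₁ * Fε (c₁ x) + t₂ * Fε (c₂ x)) μ :=
        (hint1.const_mul t₁).add (hint2.const_mul t₂)
      have : Integrable (fun x : B => t₁ * Fε (c₁ x) + t₂ * Fε (c₂ x) - Fε (cm x)) μ :=
        h12.sub hint3
      simpa [hgfundef] using this
    have hintegral : ∫ x, gfun x ∂μ = t₁ * (∫ x, Fε (c₁ x) ∂μ)
        + t₂ * (∫ x, Fε (c₂ x) ∂μ) - ∫ x, Fε (cm x) ∂μ := by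
      have h12 : Integrable (fun x : B => t₁ * Fε (c₁ x) + t₂ * Fε (c₂ x)) μ :=
        (hint1.const_mul t₁).add (hint2.const_mul t₂)
      have hml1 : ∫ x : B, t₁ * Fε (c₁ x) ∂μ = t₁ * ∫ x : B, Fε (c₁ x) ∂μ :=
        integral_const_mul t₁ _
      have hml2 : ∫ x : B, t₂ * Fε (c₂ x) ∂μ = t₂ * ∫ x : B, Fε (c₂ x) ∂μ :=
        integral_const_mul t₂ _
      simp only [hgfundef]
      rw [integral_sub h12 hint3, integral_add (hint1.const_mul t₁) (hint2.const_mul t₂),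
        hml1, hml2]
    obtain ⟨x₀, hx₀⟩ : ∃ x, c₁ x ≠ c₂ x := by
      by_contra hco
      push_neg at hco
      exact hne (by ext x; exact hco x)
    have hgpos : 0 < gfun x₀ := by
      have h := hsc.2 (hmemI c₁ h₁' x₀) (hmemI c₂ h₂' x₀) hx₀ ht₁ ht₂ hsum
      simp only [smul_eq_mul] at h
      simp only [hgfundef]
      rw [hFεeq _ (h₁' x₀), hFεeq _ (h₂' x₀), hFεeq _ (hcm' x₀), hcm_apply x₀]
      linarith [h]
    set A : Set B := gfun ⁻¹' (Set.Ioi (gfun x₀ / 2)) with hAdef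
    have hAopen : IsOpen A := hgc.isOpen_preimage _ isOpen_Ioi
    have hAne : A.Nonempty := ⟨x₀, by
      simp only [hAdef, Set.mem_preimage, Set.mem_Ioi]
      exact half_lt_self hgpos⟩
    have hμA : 0 < μ A := hfull A hAopen hAne
    have hsi1 : (gfun x₀ / 2) * (μ A).toReal ≤ ∫ x in A, gfun x ∂μ :=
      setIntegral_ge_of_const_le_real hAopen.measurableSet (measure_ne_top μ A)
        (fun x hx => le_of_lt hx) hgint.integrableOn
    have hsi2 : ∫ x in A, gfun x ∂μ ≤ ∫ x, gfun x ∂μ :=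
      setIntegral_le_integral hgint (Filter.Eventually.of_forall hg0)
    have hsi3 : 0 < (μ A).toReal := ENNReal.toReal_pos hμA.ne' (measure_ne_top μ A)
    have hIg : 0 < ∫ x, gfun x ∂μ := by
      nlinarith [mul_pos (half_pos hgpos) hsi3, hsi1, hsi2]
    show Paper.Dalpha μ α (ψ cm) b
        < t₁ • Paper.Dalpha μ α (ψ c₁) b + t₂ • Paper.Dalpha μ α (ψ c₂) b
    rw [hfS cm hcm_mem, hfS c₁ hc₁, hfS c₂ hc₂, hAc c₁ h₁', hAc c₂ h₂', hAc cm hcm']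
    have hlin : (∫ x, m x * cm x ∂μ)
        = t₁ * (∫ x, m x * c₁ x ∂μ) + t₂ * (∫ x, m x * c₂ x ∂μ) := by
      have h : Stmt10Aux.TL μ m cm = t₁ • Stmt10Aux.TL μ m c₁ + t₂ • Stmt10Aux.TL μ m c₂ := by
        rw [hcmdef, map_add, _root_.map_smul, _root_.map_smul]
      simpa [Stmt10Aux.TL_apply, smul_eq_mul] using h
    rw [hlin]
    have k₅ : t₁ * C + t₂ * C = C := by rw [← add_mul, hsum, one_mul]
    simp only [smul_eq_mul]
    nlinarith [hIg, hintegral, k₅]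
end
end

section
/- Fenchel–Legendre transform: fix α ∈ ℝ with α ≠ ±1, suppose μ has full support, i.e. μ(A) > 0 for every nonempty open A ⊆ B, and fix a, b ∈ G. Then for every c ∈ G, ∫_B (φ_{−α}(a) − φ_{−α}(b))·(φ_α(c) − φ_α(b)) dμ − D^α(c‖b) ≤ D^{−α}(a‖b), with equality if and only if c = a. Consequently D^{−α}(a‖b) = max over c ∈ G of { ∫_B (φ_{−α}(a) − φ_{−α}(b))·(φ_α(c) − φ_α(b)) dμ − D^α(c‖b) }, and the maximiser is unique. -/
open MeasureTheory BoundedContinuousFunction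

noncomputable section

open Real

lemma key_ineq (u v t s : ℝ) (huv : u + v = 1) (hu : u ≠ 0) (hv : v ≠ 0) :
    0 ≤ (v * Real.exp t + u * Real.exp s - Real.exp (v * t + u * s)) / (u * v) ∧
    ((v * Real.exp t + u * Real.exp s - Real.exp (v * t + u * s)) / (u * v) = 0 ↔ s = t) := by
  by_cases hst : s = t
  · subst hst
    have h1 : v * s + u * s = s := by linear_combination s * huv
    rw [h1]
    constructor
    · have : v * Real.exp s + u * Real.exp s - Real.exp s = 0 := by nlinarith [Real.exp_pos s]
      rw [this]; simp
    · constructor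
      · intro _; rfl
      · intro _
        have : v * Real.exp s + u * Real.exp s - Real.exp s = 0 := by nlinarith [Real.exp_pos s]
        rw [this]; simp
  · have hpos : 0 < (v * Real.exp t + u * Real.exp s - Real.exp (v * t + u * s)) / (u * v) := by
      rcases lt_trichotomy u 0 with hu' | hu' | hu'
      · -- u < 0, so v = 1 - u > 1 > 0
        have hv' : (0:ℝ) < v := by linarith
        have hne : v * t + u * s ≠ s := by
          intro h
          apply hst
          have h2 : v * t = v * s := by linear_combination h - s * huv
          exact (mul_left_cancel₀ hv h2).symm
        have hp : (0:ℝ) < 1 / v := by positivity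
        have hq : (0:ℝ) < -u / v := div_pos (by linarith) hv'
        have hpq : 1 / v + -u / v = 1 := by field_simp; linarith
        have hc := strictConvexOn_exp.2 (Set.mem_univ (v * t + u * s)) (Set.mem_univ s) hne hp hq hpq
        simp only [smul_eq_mul] at hc
        have harg : 1 / v * (v * t + u * s) + -u / v * s = t := by field_simp; ring
        rw [harg] at hc
        have hnum : v * Real.exp t + u * Real.exp s - Real.exp (v * t + u * s) < 0 := by
          have := mul_lt_mul_of_pos_left hc hv'
          have hvne : v ≠ 0 := ne_of_gt hv'
          field_simp at this
          nlinarith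
        have huv' : u * v < 0 := mul_neg_of_neg_of_pos hu' hv'
        exact div_pos_of_neg_of_neg hnum huv'
      · exact absurd hu' hu
      · rcases lt_trichotomy v 0 with hv' | hv' | hv'
        · -- v < 0, u = 1 - v > 1 > 0
          have hne : v * t + u * s ≠ t := by
            intro h
            apply hst
            have h2 : u * s = u * t := by linear_combination h - t * huv
            exact mul_left_cancel₀ hu h2
          have hp : (0:ℝ) < 1 / u := by positivity
          have hq : (0:ℝ) < -v / u := div_pos (by linarith) hu'
          have hpq : 1 / u + -v / u = 1 := by field_simp; linarith
          have hc := strictConvexOn_exp.2 (Set.mem_univ (v * t + u * s)) (Set.mem_univ t) hne hp hq hpq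
          simp only [smul_eq_mul] at hc
          have harg : 1 / u * (v * t + u * s) + -v / u * t = s := by field_simp; ring
          rw [harg] at hc
          have hnum : v * Real.exp t + u * Real.exp s - Real.exp (v * t + u * s) < 0 := by
            have := mul_lt_mul_of_pos_left hc hu'
            field_simp at this
            nlinarith
          have huv' : u * v < 0 := mul_neg_of_pos_of_neg hu' hv'
          exact div_pos_of_neg_of_neg hnum huv'
        · exact absurd hv' hv
        · -- both positive
          have hne : t ≠ s := fun h => hst h.symm
          have hc := strictConvexOn_exp.2 (Set.mem_univ t) (Set.mem_univ s) hne hv' hu' (by linarith : v + u = 1)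
          simp only [smul_eq_mul] at hc
          have hnum : 0 < v * Real.exp t + u * Real.exp s - Real.exp (v * t + u * s) := by
            linarith
          exact div_pos hnum (by positivity)
    refine ⟨hpos.le, ?_, fun h => absurd h hst⟩
    intro h; exact absurd h (ne_of_gt hpos)

lemma key_ineq' (u v t s : ℝ) (huv : u + v = 1) (hu : u ≠ 0) (hv : v ≠ 0) :
    0 ≤ 1 / u * Real.exp t + 1 / v * Real.exp s - 1 / (u * v) * Real.exp (v * t + u * s) ∧
    (1 / u * Real.exp t + 1 / v * Real.exp s - 1 / (u * v) * Real.exp (v * t + u * s) = 0 ↔ s = t) := by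
  have heq : 1 / u * Real.exp t + 1 / v * Real.exp s - 1 / (u * v) * Real.exp (v * t + u * s)
      = (v * Real.exp t + u * Real.exp s - Real.exp (v * t + u * s)) / (u * v) := by
    field_simp
  rw [heq]
  exact key_ineq u v t s huv hu hv

set_option maxHeartbeats 1000000 in
/-- Fenchel–Legendre transform: fix `α ≠ ±1`, let `μ` have full
support, and fix `a, b ∈ G`.  Then for every `c ∈ G`,
`∫ (φ_{−α}(a) − φ_{−α}(b))·(φ_α(c) − φ_α(b)) dμ − D^α(c‖b) ≤ D^{−α}(a‖b)`, with
equality iff `c = a`; hence `D^{−α}(a‖b)` is the maximum of the left-hand side over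
`c ∈ G` and the maximiser is unique. -/
theorem statement_11 {X : Type*} [NormedAddCommGroup X] [NormedSpace ℝ X]
    [MeasurableSpace X] [OpensMeasurableSpace X]
    (B : Set X) (hB : IsOpen B) (hBne : B.Nonempty)
    (μ : Measure B) [IsProbabilityMeasure μ]
    (α : ℝ) (hα1 : α ≠ 1) (hα2 : α ≠ -1)
    (hsupp : ∀ A : Set B, IsOpen A → A.Nonempty → 0 < μ A)
    (a b : BoundedContinuousFunction B ℝ) :
    ∀ c : BoundedContinuousFunction B ℝ,
      (∫ x, (Paper.phi (-α) a x - Paper.phi (-α) b x)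
          * (Paper.phi α c x - Paper.phi α b x) ∂μ)
        - Paper.Dalpha μ α c b ≤ Paper.Dalpha μ (-α) a b ∧
      ((∫ x, (Paper.phi (-α) a x - Paper.phi (-α) b x)
          * (Paper.phi α c x - Paper.phi α b x) ∂μ)
        - Paper.Dalpha μ α c b = Paper.Dalpha μ (-α) a b ↔ c = a) := by
  intro c
  have h1 : α ≠ 1 := hα1
  have h2 : -α ≠ 1 := fun h => hα2 (by linarith)
  have h3 : (-1:ℝ) ≠ 1 := by norm_num
  set u : ℝ := (1 - α) / 2 with hu_def
  set v : ℝ := (1 + α) / 2 with hv_def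
  have hu : u ≠ 0 := fun h => hα1 (by rw [hu_def] at h; linarith)
  have hv : v ≠ 0 := fun h => hα2 (by rw [hv_def] at h; linarith)
  have huv : u + v = 1 := by rw [hu_def, hv_def]; ring
  -- bounded continuous function versions of all integrands
  set P : BoundedContinuousFunction B ℝ :=
    (Paper.phi (-α) a - Paper.phi (-α) b) * (Paper.phi α c - Paper.phi α b) with hPdef
  set Q : BoundedContinuousFunction B ℝ :=
    (2 / (1 + α)) • (Paper.phi (-1) c - Paper.phi α c)
      + (2 / (1 - α)) • (Paper.phi (-1) b - Paper.phi (-α) b)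
      - Paper.phi α c * Paper.phi (-α) b with hQdef
  set R : BoundedContinuousFunction B ℝ :=
    (2 / (1 - α)) • (Paper.phi (-1) a - Paper.phi (-α) a)
      + (2 / (1 + α)) • (Paper.phi (-1) b - Paper.phi α b)
      - Paper.phi (-α) a * Paper.phi α b with hRdef
  set F : BoundedContinuousFunction B ℝ :=
    (1 / u) • Paper.expG a + (1 / v) • Paper.expG c
      - (1 / (u * v)) • Paper.expG (v • a + u • c) with hFdef
  have iAdd : ∀ f g : BoundedContinuousFunction B ℝ,
      ∫ x, (f + g) x ∂μ = (∫ x, f x ∂μ) + ∫ x, g x ∂μ := fun f g => by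
    simp only [BoundedContinuousFunction.coe_add, Pi.add_apply]
    exact integral_add (f.integrable μ) (g.integrable μ)
  have iSub : ∀ f g : BoundedContinuousFunction B ℝ,
      ∫ x, (f - g) x ∂μ = (∫ x, f x ∂μ) - ∫ x, g x ∂μ := fun f g => by
    simp only [BoundedContinuousFunction.coe_sub, Pi.sub_apply]
    exact integral_sub (f.integrable μ) (g.integrable μ)
  have iSmul : ∀ (r : ℝ) (f : BoundedContinuousFunction B ℝ),
      ∫ x, (r • f) x ∂μ = r * ∫ x, f x ∂μ := fun r f => by
    simp only [BoundedContinuousFunction.coe_smul, Pi.smul_apply, smul_eq_mul]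
    exact integral_const_mul r _
  have hQ : ∫ x, Q x ∂μ = Paper.Dalpha μ α c b := by
    rw [hQdef, iSub, iAdd, iSmul, iSmul]
    simp only [Paper.Dalpha, BoundedContinuousFunction.coe_sub, Pi.sub_apply,
      BoundedContinuousFunction.coe_mul, Pi.mul_apply]
  have hR : ∫ x, R x ∂μ = Paper.Dalpha μ (-α) a b := by
    rw [hRdef, iSub, iAdd, iSmul, iSmul]
    simp only [Paper.Dalpha, neg_neg, BoundedContinuousFunction.coe_sub, Pi.sub_apply,
      BoundedContinuousFunction.coe_mul, Pi.mul_apply]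
    ring_nf
  have hP : ∫ x, P x ∂μ
      = ∫ x, (Paper.phi (-α) a x - Paper.phi (-α) b x)
          * (Paper.phi α c x - Paper.phi α b x) ∂μ := by
    rw [hPdef]
    simp only [BoundedContinuousFunction.coe_sub, Pi.sub_apply,
      BoundedContinuousFunction.coe_mul, Pi.mul_apply]
  have hFeq : F = Q + R - P := by
    ext x
    rw [hFdef, hQdef, hRdef, hPdef]
    simp only [Paper.phi, if_neg h1, if_neg h2, if_neg h3, neg_neg,
      BoundedContinuousFunction.coe_add, Pi.add_apply,
      BoundedContinuousFunction.coe_sub, Pi.sub_apply,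
      BoundedContinuousFunction.coe_mul, Pi.mul_apply,
      BoundedContinuousFunction.coe_smul, Pi.smul_apply, smul_eq_mul,
      Paper.expG_apply, BoundedContinuousFunction.coe_one, Pi.one_apply]
    simp only [hu_def, hv_def, sub_neg_eq_add]
    norm_num
    rw [show Real.exp (a x) = Real.exp ((1 - α) / 2 * a x) * Real.exp ((1 + α) / 2 * a x) by
        rw [← Real.exp_add]; congr 1; ring,
      show Real.exp (b x) = Real.exp ((1 - α) / 2 * b x) * Real.exp ((1 + α) / 2 * b x) by
        rw [← Real.exp_add]; congr 1; ring,
      show Real.exp (c x) = Real.exp ((1 - α) / 2 * c x) * Real.exp ((1 + α) / 2 * c x) by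
        rw [← Real.exp_add]; congr 1; ring,
      Real.exp_add]
    generalize Real.exp ((1 - α) / 2 * a x) = A1
    generalize Real.exp ((1 + α) / 2 * a x) = A2
    generalize Real.exp ((1 - α) / 2 * b x) = B1
    generalize Real.exp ((1 + α) / 2 * b x) = B2
    generalize Real.exp ((1 - α) / 2 * c x) = C1
    generalize Real.exp ((1 + α) / 2 * c x) = C2
    have d1 : (1:ℝ) - α ≠ 0 := fun h => hα1 (by linarith)
    have d2 : (1:ℝ) + α ≠ 0 := fun h => hα2 (by linarith)
    field_simp
    ring
  have hFint : ∫ x, F x ∂μ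
      = Paper.Dalpha μ α c b + Paper.Dalpha μ (-α) a b
        - ∫ x, (Paper.phi (-α) a x - Paper.phi (-α) b x)
            * (Paper.phi α c x - Paper.phi α b x) ∂μ := by
    rw [hFeq, iSub, iAdd, hQ, hR, hP]
  have hkey := fun x : B => key_ineq' u v (a x) (c x) huv hu hv
  have hFx : ∀ x : B, F x
      = 1 / u * Real.exp (a x) + 1 / v * Real.exp (c x)
        - 1 / (u * v) * Real.exp (v * a x + u * c x) := by
    intro x
    rw [hFdef]
    simp only [BoundedContinuousFunction.coe_add, Pi.add_apply,
      BoundedContinuousFunction.coe_sub, Pi.sub_apply,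
      BoundedContinuousFunction.coe_smul, Pi.smul_apply, smul_eq_mul,
      Paper.expG_apply]
  have hFnn : ∀ x : B, 0 ≤ F x := fun x => by rw [hFx x]; exact (hkey x).1
  have hFzero : ∀ x : B, F x = 0 ↔ c x = a x := fun x => by rw [hFx x]; exact (hkey x).2
  have hFintnn : 0 ≤ ∫ x, F x ∂μ := integral_nonneg hFnn
  constructor
  · linarith [hFintnn, hFint]
  · constructor
    · intro heq
      have hz : ∫ x, F x ∂μ = 0 := by linarith [hFint]
      have hae : (fun x => F x) =ᵐ[μ] 0 :=
        (integral_eq_zero_iff_of_nonneg hFnn (F.integrable μ)).mp hz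
      have hall : ∀ x : B, F x = 0 := by
        by_contra hcon
        push_neg at hcon
        obtain ⟨x0, hx0⟩ := hcon
        have hopen : IsOpen {x : B | F x ≠ 0} := by
          have : {x : B | F x ≠ 0} = (fun x => F x) ⁻¹' ({0}ᶜ) := rfl
          rw [this]
          exact F.continuous.isOpen_preimage _ isOpen_compl_singleton
        have hpos := hsupp _ hopen ⟨x0, hx0⟩
        have : μ {x : B | F x ≠ 0} = 0 := by
          have := hae
          rw [Filter.EventuallyEq, ae_iff] at this
          simpa using this
        rw [this] at hpos
        exact lt_irrefl 0 hpos
      ext x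
      exact (hFzero x).mp (hall x)
    · intro hca
      subst hca
      have hz : ∀ x : B, F x = 0 := fun x => (hFzero x).mpr rfl
      have : ∫ x, F x ∂μ = 0 := by
        rw [show (fun x => F x) = (fun _ => (0:ℝ)) from funext hz]
        simp
      linarith [hFint]
end
end

section
/- Chart representation of the α-covariant derivative on M: fix α ∈ ℝ, a, u ∈ G, and let v : G → G be Fréchet differentiable. Define g : G → G by g(c) := exp_G(((1−α)/2)·c)·v(c). Then exp_G(−((1−α)/2)·a)·(Dg(a)(u)) = Dv(a)(u) + ((1−α)/2)·u·v(a), where Dg(a) and Dv(a) denote Fréchet derivatives. (This identity says that the covariant derivative ∇^α, defined by requiring the chart φ_α to be affine, has φ₁-chart representation (u, v) ↦ Dv(a)(u) + ((1−α)/2)·u·v(a); it yields the linear relation ∇^α = ((1−α)/2)∇^{−1} + ((1+α)/2)∇^{+1}.) -/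
open MeasureTheory BoundedContinuousFunction

noncomputable section

open Asymptotics in
lemma hasFDerivAt_expG {Y : Type*} [TopologicalSpace Y]
    (a : BoundedContinuousFunction Y ℝ) :
    HasFDerivAt Paper.expG
      (ContinuousLinearMap.mul ℝ (BoundedContinuousFunction Y ℝ) (Paper.expG a)) a := by
  rw [hasFDerivAt_iff_isLittleO_nhds_zero]
  have hO : (fun h : BoundedContinuousFunction Y ℝ =>
      Paper.expG (a + h) - Paper.expG a - Paper.expG a * h)
      =O[nhds 0] fun h => ‖h‖ ^ 2 := by
    rw [Asymptotics.isBigO_iff]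
    refine ⟨Real.exp ‖a‖, ?_⟩
    filter_upwards [Metric.ball_mem_nhds (0 : BoundedContinuousFunction Y ℝ) one_pos] with h hh
    rw [mem_ball_zero_iff] at hh
    have hC : (0:ℝ) ≤ Real.exp ‖a‖ * ‖h‖ ^ 2 := by positivity
    rw [Real.norm_eq_abs, abs_of_nonneg (sq_nonneg _)]
    refine (BoundedContinuousFunction.norm_le hC).2 fun x => ?_
    have hx : |h x| ≤ 1 := le_trans (h.norm_coe_le_norm x) hh.le
    have key := Real.abs_exp_sub_one_sub_id_le hx
    simp only [BoundedContinuousFunction.coe_sub, BoundedContinuousFunction.coe_mul,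
      Pi.sub_apply, Pi.mul_apply, Paper.expG_apply, BoundedContinuousFunction.coe_add,
      Pi.add_apply, Real.norm_eq_abs]
    have : Real.exp (a x + h x) - Real.exp (a x) - Real.exp (a x) * h x
        = Real.exp (a x) * (Real.exp (h x) - 1 - h x) := by rw [Real.exp_add]; ring
    rw [this, abs_mul, abs_of_pos (Real.exp_pos _)]
    have h1 : Real.exp (a x) ≤ Real.exp ‖a‖ :=
      Real.exp_le_exp.2 ((le_abs_self _).trans (a.norm_coe_le_norm x))
    have h2 : (h x) ^ 2 ≤ ‖h‖ ^ 2 := by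
      rw [← sq_abs]
      exact pow_le_pow_left₀ (abs_nonneg _) (h.norm_coe_le_norm x) 2
    calc Real.exp (a x) * |Real.exp (h x) - 1 - h x| ≤ Real.exp (a x) * (h x)^2 :=
          mul_le_mul_of_nonneg_left key (Real.exp_pos _).le
      _ ≤ Real.exp ‖a‖ * ‖h‖^2 := by
          exact mul_le_mul h1 h2 (sq_nonneg _) (Real.exp_pos _).le
  exact hO.trans_isLittleO (Asymptotics.isLittleO_norm_pow_id one_lt_two)



/-- chart representation of the α-covariant derivative on `M`: for
`α ∈ ℝ`, `a, u ∈ G` and a Fréchet differentiable `v : G → G`, setting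
`g(c) := exp_G(((1−α)/2)·c)·v(c)` one has
`exp_G(−((1−α)/2)·a)·(Dg(a)(u)) = Dv(a)(u) + ((1−α)/2)·u·v(a)`. -/
theorem statement_14 {X : Type*} [NormedAddCommGroup X] [NormedSpace ℝ X]
    (B : Set X) (hB : IsOpen B) (hBne : B.Nonempty) (α : ℝ)
    (a u : BoundedContinuousFunction B ℝ)
    (v : BoundedContinuousFunction B ℝ → BoundedContinuousFunction B ℝ)
    (hv : Differentiable ℝ v) :
    Paper.expG (-(((1 - α) / 2) • a))
        * fderiv ℝ (fun c => Paper.expG (((1 - α) / 2) • c) * v c) a u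
      = fderiv ℝ v a u + ((1 - α) / 2) • (u * v a) := by
  set s : ℝ := (1 - α) / 2 with hs
  have hsm : HasFDerivAt (fun c : BoundedContinuousFunction B ℝ => s • c) (s • ContinuousLinearMap.id ℝ (BoundedContinuousFunction B ℝ)) a := by
    exact (hasFDerivAt_id a).const_smul s
  have h1 : HasFDerivAt (fun c : BoundedContinuousFunction B ℝ => Paper.expG (s • c))
      ((ContinuousLinearMap.mul ℝ (BoundedContinuousFunction B ℝ) (Paper.expG (s • a))).comp
        (s • ContinuousLinearMap.id ℝ (BoundedContinuousFunction B ℝ))) a :=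
    (hasFDerivAt_expG (s • a)).comp a hsm
  have h2 : HasFDerivAt v (fderiv ℝ v a) a := (hv a).hasFDerivAt
  have hg := h1.mul h2
  rw [show (fun c => Paper.expG (s • c) * v c) = (fun c => Paper.expG (s • c)) * v from rfl, hg.fderiv]
  ext x
  simp only [ContinuousLinearMap.add_apply, ContinuousLinearMap.smul_apply,
    ContinuousLinearMap.comp_apply, ContinuousLinearMap.mul_apply',
    ContinuousLinearMap.id_apply, BoundedContinuousFunction.coe_mul,
    BoundedContinuousFunction.coe_add, Pi.mul_apply, Pi.add_apply,
    BoundedContinuousFunction.coe_smul, Pi.smul_apply, Paper.expG_apply,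
    smul_eq_mul, BoundedContinuousFunction.coe_neg, Pi.neg_apply]
  rw [Real.exp_neg]
  field_simp
end
end

section
/- For each fixed a ∈ G, the map F : ℝ → G defined by F(α) := φ_α(a), i.e. F(α) = (2/(1−α))·(exp_G(((1−α)/2)·a) − 1) for α ≠ 1 and F(1) = a, is of class C^∞ (infinitely differentiable as a map from ℝ to the Banach space G). -/
open MeasureTheory BoundedContinuousFunction

noncomputable section

open NormedSpace Nat in
section

open MeasureTheory BoundedContinuousFunction NormedSpace Nat

namespace Aux19

variable {Y : Type*} [TopologicalSpace Y]

def evalRingHom (x : Y) : BoundedContinuousFunction Y ℝ →+* ℝ where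
  toFun f := f x
  map_one' := rfl
  map_mul' _ _ := rfl
  map_zero' := rfl
  map_add' _ _ := rfl

lemma eval_exp (b : BoundedContinuousFunction Y ℝ) (x : Y) :
    exp b x = Real.exp (b x) := by
  have h := map_exp (evalRingHom x) (continuous_eval_const x) b
  rw [Real.exp_eq_exp_ℝ]
  exact h

noncomputable def c (a : BoundedContinuousFunction Y ℝ) (n : ℕ) :
    BoundedContinuousFunction Y ℝ := (((n + 1)! : ℝ)⁻¹) • a ^ (n + 1)

noncomputable def g (a : BoundedContinuousFunction Y ℝ) (t : ℝ) :
    BoundedContinuousFunction Y ℝ :=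
  if t = 0 then a else t⁻¹ • (exp (t • a) - 1)

noncomputable def pser (a : BoundedContinuousFunction Y ℝ) :
    FormalMultilinearSeries ℝ ℝ (BoundedContinuousFunction Y ℝ) :=
  fun n => ContinuousMultilinearMap.mkPiRing ℝ (Fin n) (c a n)

lemma hasSum_g (a : BoundedContinuousFunction Y ℝ) (t : ℝ) :
    HasSum (fun n : ℕ => t ^ n • c a n) (g a t) := by
  by_cases ht : t = 0
  · subst ht
    rw [g, if_pos rfl]
    have h0 : ∀ n : ℕ, n ≠ 0 → (0 : ℝ) ^ n • c a n = 0 := by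
      intro n hn
      rw [zero_pow hn, zero_smul]
    have := hasSum_single (f := fun n : ℕ => (0 : ℝ) ^ n • c a n) 0 h0
    simpa [c] using this
  · rw [g, if_neg ht]
    have h := exp_series_hasSum_exp' (𝕂 := ℝ) (t • a)
    have h1 : HasSum (fun n : ℕ => (((n + 1)! : ℝ)⁻¹) • (t • a) ^ (n + 1))
        (exp (t • a) - 1) := by
      have := (hasSum_nat_add_iff' (f := fun n : ℕ => ((n ! : ℝ)⁻¹) • (t • a) ^ n)
        (g := exp (t • a)) 1).2 h
      simpa using this
    have key : (fun n : ℕ => (((n + 1)! : ℝ)⁻¹) • (t • a) ^ (n + 1))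
        = fun n : ℕ => t ^ (n + 1) • c a n := by
      funext n
      rw [smul_pow, c, smul_comm]
    rw [key] at h1
    have h3 := h1.const_smul t⁻¹
    have key2 : (fun n : ℕ => t⁻¹ • t ^ (n + 1) • c a n)
        = fun n : ℕ => t ^ n • c a n := by
      funext n
      rw [smul_smul, pow_succ, ← mul_assoc, mul_comm t⁻¹, mul_assoc,
        inv_mul_cancel₀ ht, mul_one]
    rwa [key2] at h3

lemma radius_pser (a : BoundedContinuousFunction Y ℝ) : (pser a).radius = ⊤ := by
  apply FormalMultilinearSeries.radius_eq_top_of_summable_norm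
  intro r
  have hb : ∀ n : ℕ, ‖pser a n‖ * (r : ℝ) ^ n ≤ ‖a‖ * ((‖a‖ * r) ^ n / n !) := by
    intro n
    have h1 : ‖pser a n‖ = ‖c a n‖ := ContinuousMultilinearMap.norm_mkPiRing _
    have h2 : ‖c a n‖ ≤ (((n + 1)! : ℝ)⁻¹) * ‖a‖ ^ (n + 1) := by
      rw [c, norm_smul ((((n : ℕ) + 1)! : ℝ)⁻¹) (a ^ (n + 1))]
      have := norm_pow_le' a (Nat.succ_pos n)
      have hnn : |(((n + 1)! : ℝ)⁻¹)| = ((n + 1)! : ℝ)⁻¹ := by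
        rw [abs_of_nonneg]; positivity
      rw [Real.norm_eq_abs, hnn]
      exact mul_le_mul_of_nonneg_left this (by positivity)
    have h3 : (((n + 1)! : ℝ)⁻¹) ≤ ((n ! : ℝ)⁻¹) := by
      apply inv_anti₀
      · positivity
      · exact_mod_cast Nat.factorial_le (Nat.le_succ n)
    calc ‖pser a n‖ * (r : ℝ) ^ n
        ≤ ((((n + 1)! : ℝ)⁻¹) * ‖a‖ ^ (n + 1)) * (r : ℝ) ^ n := by
          rw [h1]
          exact mul_le_mul_of_nonneg_right h2 (by positivity)
      _ ≤ (((n ! : ℝ)⁻¹) * ‖a‖ ^ (n + 1)) * (r : ℝ) ^ n := by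
          apply mul_le_mul_of_nonneg_right _ (by positivity)
          exact mul_le_mul_of_nonneg_right h3 (by positivity)
      _ = ‖a‖ * ((‖a‖ * r) ^ n / n !) := by
          rw [pow_succ, mul_pow]
          field_simp
  refine Summable.of_nonneg_of_le (fun n => by positivity) hb ?_
  exact (Real.summable_pow_div_factorial (‖a‖ * r)).mul_left _

lemma hasFPowerSeries_g (a : BoundedContinuousFunction Y ℝ) :
    HasFPowerSeriesOnBall (g a) (pser a) 0 ⊤ where
  r_le := by rw [radius_pser]
  r_pos := ENNReal.zero_lt_top
  hasSum := by
    intro y _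
    have := hasSum_g a y
    have hp : ∀ n : ℕ, (pser a n fun _ => y) = y ^ n • c a n := by
      intro n
      rw [pser, ContinuousMultilinearMap.mkPiRing_apply]
      congr 1
      simp [Finset.prod_const]
    simpa [hp] using this

lemma contDiff_g (a : BoundedContinuousFunction Y ℝ) :
    ContDiff ℝ (⊤ : ℕ∞) (g a) := by
  rw [contDiff_iff_contDiffAt]
  intro x
  have h := (hasFPowerSeries_g a).analyticOnNhd
  exact (h x (by simp)).contDiffAt


lemma expG_eq (b : BoundedContinuousFunction Y ℝ) : Paper.expG b = exp b := by
  ext x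
  rw [Paper.expG_apply]
  exact (eval_exp b x).symm

end Aux19

end


/-- for each fixed `a ∈ G`, the map `ℝ ∋ α ↦ φ_α(a) ∈ G` is of class
`C^∞`. -/
theorem statement_19 {X : Type*} [NormedAddCommGroup X] [NormedSpace ℝ X]
    (B : Set X) (hB : IsOpen B) (hBne : B.Nonempty)
    (a : BoundedContinuousFunction B ℝ) :
    ContDiff ℝ (⊤ : ℕ∞) (fun α : ℝ => Paper.phi α a) := by
  have hg : (fun α : ℝ => Paper.phi α a)
      = (fun t => Aux19.g a t) ∘ (fun α : ℝ => (1 - α) / 2) := by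
    funext α
    simp only [Function.comp_apply, Paper.phi, Aux19.g]
    by_cases h : α = 1
    · rw [if_pos h, if_pos (by rw [h]; norm_num)]
    · have h1 : (1 : ℝ) - α ≠ 0 := sub_ne_zero.mpr (Ne.symm h)
      have ht : (1 - α) / 2 ≠ 0 := div_ne_zero h1 two_ne_zero
      rw [if_neg h, if_neg ht, Aux19.expG_eq, inv_div]
  rw [hg]
  exact (Aux19.contDiff_g a).comp ((contDiff_const.sub contDiff_id).div_const 2)
end
end
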